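/- arXiv:math-ph/9902017 — 4 statements merged into one kernel-verified Lean document; each statement's English description precedes it below -/
import Mathlib

section
/- Entropy decomposition: let n ≥ 1 and let ψ ∈ ℂ^(n+1) be a unit vector represented by the sphere points ω_1, …, ω_n with constant c > 0. Then the Wehrl entropy satisfies S_W(ψ) = −(n+1) Σ_{i=1}^n ∫ |⟨v_n(Ω), ψ⟩|² ln |⟨v_1(Ω), v_1(ω_i)⟩|² dΩ/4π − ln c. -/
open MeasureTheory

/-- The Bloch coherent state of spin `n/2` with parameters `Ω = (p, φ)`:
components `(v_n(Ω))_k = √(binom n k) · p^(k/2) · (1-p)^((n-k)/2) · exp(-i k φ)`. -/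
noncomputable def bloch (n : ℕ) (Ω : ℝ × ℝ) : EuclideanSpace ℂ (Fin (n + 1)) :=
  WithLp.toLp 2 fun k => (↑(Real.sqrt (n.choose k) * Real.sqrt Ω.1 ^ (k : ℕ) *
      Real.sqrt (1 - Ω.1) ^ (n - (k : ℕ))) : ℂ) *
    Complex.exp (-((k : ℕ) : ℂ) * Complex.I * (Ω.2 : ℂ))

/-- A sphere point: `(p, φ) ∈ [0,1] × [0, 2π)`. -/
def IsSpherePt (Ω : ℝ × ℝ) : Prop :=
  Ω.1 ∈ Set.Icc (0 : ℝ) 1 ∧ Ω.2 ∈ Set.Ico (0 : ℝ) (2 * Real.pi)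

/-- The overlap `⟨v_n(Ω), ψ⟩` (inner product conjugate-linear in the first argument). -/
noncomputable def ov (n : ℕ) (Ω : ℝ × ℝ) (ψ : EuclideanSpace ℂ (Fin (n + 1))) : ℂ :=
  inner ℂ (bloch n Ω) ψ

/-- Normalized integral over the sphere: `∫ f(Ω) dΩ/4π = ∫_0^1 ∫_0^{2π} f(p,φ) dφ/(2π) dp`. -/
noncomputable def sphereInt (f : ℝ × ℝ → ℝ) : ℝ :=
  ∫ p in (0 : ℝ)..1, (∫ φ in (0 : ℝ)..(2 * Real.pi), f (p, φ)) / (2 * Real.pi)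

/-- The Wehrl entropy of a state `ψ ∈ ℂ^(n+1)`. -/
noncomputable def wehrl (n : ℕ) (ψ : EuclideanSpace ℂ (Fin (n + 1))) : ℝ :=
  -((n : ℝ) + 1) * sphereInt (fun Ω => ‖ov n Ω ψ‖ ^ 2 * Real.log (‖ov n Ω ψ‖ ^ 2))

/-- `ψ` is represented by the `n` sphere points `ω 1, …, ω n` with constant `c`:
`|⟨v_n(Ω), ψ⟩|² = c · ∏ k, |⟨v_1(Ω), v_1(ω k)⟩|²` for every sphere point `Ω`. -/
def Represents (n : ℕ) (ψ : EuclideanSpace ℂ (Fin (n + 1))) (ω : Fin n → ℝ × ℝ) (c : ℝ) :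
    Prop :=
  (∀ k, IsSpherePt (ω k)) ∧
    ∀ Ω, IsSpherePt Ω → ‖ov n Ω ψ‖ ^ 2 = c * ∏ k : Fin n, ‖ov 1 Ω (bloch 1 (ω k))‖ ^ 2

/-- Squared chordal distance between two sphere points (sphere of radius 1/2):
`d(ω, ω') = 1 - |⟨v_1(ω), v_1(ω')⟩|²`. -/
noncomputable def chord (ω ω' : ℝ × ℝ) : ℝ := 1 - ‖ov 1 ω (bloch 1 ω')‖ ^ 2

/-- `ψ` is a coherent state, i.e. `ψ = e^{iθ} v_n(Ω)` for some `θ` and some sphere point `Ω`. -/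
def IsCoherent (n : ℕ) (ψ : EuclideanSpace ℂ (Fin (n + 1))) : Prop :=
  ∃ (θ : ℝ) (Ω : ℝ × ℝ), IsSpherePt Ω ∧ ψ = Complex.exp ((θ : ℂ) * Complex.I) • bloch n Ω

-- amplitude
noncomputable def amp (n k : ℕ) (p : ℝ) : ℝ :=
  Real.sqrt (n.choose k) * Real.sqrt p ^ k * Real.sqrt (1 - p) ^ (n - k)

lemma bloch_apply (n : ℕ) (p φ : ℝ) (k : Fin (n+1)) :
    bloch n (p, φ) k = (amp n k p : ℂ) * Complex.exp (-((k:ℕ) : ℂ) * Complex.I * φ) := rfl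

lemma ov_eq (n : ℕ) (Ω : ℝ × ℝ) (ψ : EuclideanSpace ℂ (Fin (n + 1))) :
    ov n Ω ψ = ∑ k : Fin (n+1), (starRingEnd ℂ) (bloch n Ω k) * ψ k := by
  simp [ov, PiLp.inner_apply, RCLike.inner_apply, mul_comm]

lemma continuous_ov (n : ℕ) (ψ : EuclideanSpace ℂ (Fin (n + 1))) :
    Continuous fun Ω => ov n Ω ψ := by
  simp only [ov_eq]
  refine continuous_finset_sum _ fun k _ => Continuous.mul ?_ continuous_const
  refine Complex.continuous_conj.comp ?_
  show Continuous fun Ω : ℝ × ℝ => bloch n Ω k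
  unfold bloch
  fun_prop

lemma continuous_nsq (n : ℕ) (ψ : EuclideanSpace ℂ (Fin (n + 1))) :
    Continuous fun Ω => ‖ov n Ω ψ‖ ^ 2 := ((continuous_ov n ψ).norm.pow 2)

lemma sphereInt_congr {f g : ℝ × ℝ → ℝ} (h : ∀ Ω, IsSpherePt Ω → f Ω = g Ω) :
    sphereInt f = sphereInt g := by
  unfold sphereInt
  refine intervalIntegral.integral_congr fun p hp => ?_
  rw [Set.uIcc_of_le (by norm_num)] at hp
  congr 1
  refine intervalIntegral.integral_congr_ae ?_
  have h2 : ∀ᵐ (x : ℝ), x ≠ 2 * Real.pi := by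
    refine mem_ae_iff.2 ?_
    have : {x : ℝ | x ≠ 2 * Real.pi}ᶜ = {2 * Real.pi} := by
      ext x; simp
    rw [this]; exact Real.volume_singleton
  filter_upwards [h2] with φ hφ hmem
  rw [Set.uIoc_of_le (by positivity)] at hmem
  exact h (p, φ) ⟨hp, ⟨le_of_lt hmem.1, lt_of_le_of_ne hmem.2 hφ⟩⟩

lemma sphereInt_const_mul (a : ℝ) (f : ℝ × ℝ → ℝ) :
    sphereInt (fun Ω => a * f Ω) = a * sphereInt f := by
  unfold sphereInt
  rw [← intervalIntegral.integral_const_mul]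
  refine intervalIntegral.integral_congr fun p _ => ?_
  rw [intervalIntegral.integral_const_mul, mul_div_assoc]

lemma sphereInt_add {f g : ℝ × ℝ → ℝ} (hf : Continuous f) (hg : Continuous g) :
    sphereInt (fun Ω => f Ω + g Ω) = sphereInt f + sphereInt g := by
  unfold sphereInt
  rw [← intervalIntegral.integral_add]
  · refine intervalIntegral.integral_congr fun p _ => ?_
    rw [intervalIntegral.integral_add, add_div]
    · exact (hf.comp (by fun_prop)).intervalIntegrable _ _
    · exact (hg.comp (by fun_prop)).intervalIntegrable _ _
  · refine Continuous.intervalIntegrable ?_ _ _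
    exact (intervalIntegral.continuous_parametric_intervalIntegral_of_continuous'
      (f := fun p φ => f (p, φ)) (by fun_prop) _ _).div_const _
  · refine Continuous.intervalIntegrable ?_ _ _
    exact (intervalIntegral.continuous_parametric_intervalIntegral_of_continuous'
      (f := fun p φ => g (p, φ)) (by fun_prop) _ _).div_const _

lemma sphereInt_sum {ι : Type*} (s : Finset ι) (f : ι → ℝ × ℝ → ℝ)
    (hf : ∀ i, Continuous (f i)) :
    sphereInt (fun Ω => ∑ i ∈ s, f i Ω) = ∑ i ∈ s, sphereInt (f i) := by
  classical
  induction s using Finset.induction with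
  | empty => simp [sphereInt]
  | insert a s hx ih =>
    rw [Finset.sum_insert hx, ← ih]
    rw [← sphereInt_add (hf a) (by exact continuous_finset_sum _ fun i _ => hf i)]
    apply sphereInt_congr
    intro Ω _
    rw [Finset.sum_insert hx]

open Nat

lemma factorial_mul_prod (k : ℕ) : ∀ m : ℕ,
    (k ! : ℂ) * ∏ j ∈ Finset.range (m + 1), ((k : ℂ) + 1 + j) = ((k + m + 1)! : ℂ) := by
  intro m
  induction m with
  | zero =>
    rw [Finset.prod_range_one, show k + 0 + 1 = k + 1 from rfl, Nat.factorial_succ]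
    simp only [Nat.cast_mul, Nat.cast_add, Nat.cast_one, Nat.cast_zero]
    ring
  | succ m ih =>
    rw [Finset.prod_range_succ, ← mul_assoc, ih,
      show k + (m + 1) + 1 = (k + m + 1) + 1 from by omega, Nat.factorial_succ (k + m + 1)]
    simp only [Nat.cast_mul, Nat.cast_add, Nat.cast_one]
    ring

lemma integral_pow_mul_one_sub_pow (k m : ℕ) :
    (∫ x in (0:ℝ)..1, x ^ k * (1 - x) ^ m) = (k ! : ℝ) * m ! / (k + m + 1)! := by
  have hbeta := Complex.betaIntegral_eval_nat_add_one_right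
    (u := (k : ℂ) + 1) (by simp; positivity) m
  have hlhs : Complex.betaIntegral ((k:ℂ) + 1) ((m:ℂ) + 1)
      = ((∫ x in (0:ℝ)..1, x ^ k * (1 - x) ^ m : ℝ) : ℂ) := by
    rw [Complex.betaIntegral, ← intervalIntegral.integral_ofReal]
    refine intervalIntegral.integral_congr fun x _ => ?_
    push_cast
    rw [add_sub_cancel_right, add_sub_cancel_right, Complex.cpow_natCast, Complex.cpow_natCast]
  rw [hlhs] at hbeta
  have hprod := factorial_mul_prod k m
  have hkf : (k ! : ℂ) ≠ 0 := by exact_mod_cast Nat.factorial_ne_zero k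
  have hbig : ((k + m + 1)! : ℂ) ≠ 0 := by exact_mod_cast Nat.factorial_ne_zero _
  have hP : (∏ j ∈ Finset.range (m + 1), ((k : ℂ) + 1 + j)) ≠ 0 := by
    intro h
    rw [h, mul_zero] at hprod
    exact hbig hprod.symm
  have : ((∫ x in (0:ℝ)..1, x ^ k * (1 - x) ^ m : ℝ) : ℂ)
      = ((k ! : ℝ) * m ! / (k + m + 1)! : ℝ) := by
    rw [hbeta]
    push_cast
    rw [div_eq_div_iff hP hbig, ← hprod]
    ring
  exact_mod_cast this

lemma integral_exp_orth (j k : ℕ) :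
    (∫ t in (0:ℝ)..(2 * Real.pi), Complex.exp (((k:ℂ) - (j:ℂ)) * Complex.I * t))
      = if j = k then (2 * Real.pi : ℂ) else 0 := by
  by_cases h : j = k
  · subst h
    simp [Real.pi_ne_zero]
  · have hne : ((k:ℂ) - (j:ℂ)) * Complex.I ≠ 0 := by
      apply mul_ne_zero _ Complex.I_ne_zero
      rw [sub_ne_zero]
      exact_mod_cast fun hh => h (by exact_mod_cast hh.symm)
    rw [if_neg h]
    have hint := integral_exp_mul_complex (a := (0:ℝ)) (b := 2 * Real.pi) hne
    simp only [mul_assoc] at hint ⊢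
    rw [hint]
    have h1 : (((k:ℂ) - (j:ℂ)) * (Complex.I * ((2 * Real.pi : ℝ) : ℂ)))
        = (((k:ℤ) - (j:ℤ) : ℤ) : ℂ) * (2 * Real.pi * Complex.I) := by
      push_cast; ring
    rw [h1, Complex.exp_int_mul_two_pi_mul_I]
    simp

lemma continuous_amp (n k : ℕ) : Continuous fun p => amp n k p := by
  unfold amp; fun_prop

lemma conj_bloch (n : ℕ) (p t : ℝ) (k : Fin (n+1)) :
    (starRingEnd ℂ) (bloch n (p, t) k)
      = (amp n k p : ℂ) * Complex.exp (((k:ℕ) : ℂ) * Complex.I * t) := by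
  rw [bloch_apply, map_mul, Complex.conj_ofReal, ← Complex.exp_conj]
  congr 1
  simp [map_mul, Complex.conj_I, Complex.conj_ofReal]

lemma ov_expand (n : ℕ) (ψ : EuclideanSpace ℂ (Fin (n + 1))) (p t : ℝ) :
    ov n (p, t) ψ = ∑ k : Fin (n+1),
      ((amp n k p : ℂ) * Complex.exp (((k:ℕ) : ℂ) * Complex.I * t)) * ψ k := by
  rw [ov_eq]
  exact Finset.sum_congr rfl fun k _ => by rw [conj_bloch]

lemma nsq_expand (n : ℕ) (ψ : EuclideanSpace ℂ (Fin (n + 1))) (p t : ℝ) :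
    ((‖ov n (p, t) ψ‖ ^ 2 : ℝ) : ℂ) = ∑ j : Fin (n+1), ∑ k : Fin (n+1),
      ((starRingEnd ℂ) (ψ j) * ψ k * (amp n j p) * (amp n k p))
        * Complex.exp ((((k:ℕ):ℂ) - ((j:ℕ):ℂ)) * Complex.I * t) := by
  have h0 : ((‖ov n (p, t) ψ‖ ^ 2 : ℝ) : ℂ)
      = (starRingEnd ℂ) (ov n (p, t) ψ) * ov n (p, t) ψ := by
    rw [Complex.conj_mul']; push_cast; ring
  rw [h0, ov_expand]
  rw [map_sum, Finset.sum_mul_sum]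
  refine Finset.sum_congr rfl fun j _ => Finset.sum_congr rfl fun k _ => ?_
  rw [map_mul, map_mul, Complex.conj_ofReal, ← Complex.exp_conj]
  have h1 : (starRingEnd ℂ) (((j:ℕ) : ℂ) * Complex.I * t) = -(((j:ℕ):ℂ) * Complex.I * t) := by
    simp [map_mul, Complex.conj_I, Complex.conj_ofReal]
  rw [h1]
  have h2 : ((amp n j p : ℝ) : ℂ) * Complex.exp (-(((j:ℕ):ℂ) * Complex.I * t))
      * (starRingEnd ℂ) (ψ j)
      * (((amp n k p : ℝ) : ℂ) * Complex.exp (((k:ℕ):ℂ) * Complex.I * t) * ψ k)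
      = ((starRingEnd ℂ) (ψ j) * ψ k * ((amp n j p : ℝ) : ℂ) * ((amp n k p : ℝ) : ℂ))
        * (Complex.exp (-(((j:ℕ):ℂ) * Complex.I * t)) * Complex.exp (((k:ℕ):ℂ) * Complex.I * t)) := by
    ring
  rw [h2, ← Complex.exp_add,
    show -(((j:ℕ):ℂ) * Complex.I * t) + ((k:ℕ):ℂ) * Complex.I * t
      = (((k:ℕ):ℂ) - ((j:ℕ):ℂ)) * Complex.I * t from by ring]

lemma phi_integral (n : ℕ) (ψ : EuclideanSpace ℂ (Fin (n + 1))) (p : ℝ) :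
    (∫ t in (0:ℝ)..(2 * Real.pi), ‖ov n (p, t) ψ‖ ^ 2)
      = 2 * Real.pi * ∑ j : Fin (n+1), ‖ψ j‖ ^ 2 * amp n j p ^ 2 := by
  have key : ((∫ t in (0:ℝ)..(2 * Real.pi), ‖ov n (p, t) ψ‖ ^ 2 : ℝ) : ℂ)
      = ((2 * Real.pi * ∑ j : Fin (n+1), ‖ψ j‖ ^ 2 * amp n j p ^ 2 : ℝ) : ℂ) := by
    rw [← intervalIntegral.integral_ofReal]
    have hre : (fun t : ℝ => ((‖ov n (p, t) ψ‖ ^ 2 : ℝ) : ℂ))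
        = fun t : ℝ => ∑ j : Fin (n+1), ∑ k : Fin (n+1),
          ((starRingEnd ℂ) (ψ j) * ψ k * (amp n j p) * (amp n k p))
            * Complex.exp ((((k:ℕ):ℂ) - ((j:ℕ):ℂ)) * Complex.I * t) :=
      funext fun t => nsq_expand n ψ p t
    rw [hre]
    rw [intervalIntegral.integral_finset_sum (fun j _ => by
      apply Continuous.intervalIntegrable
      refine continuous_finset_sum _ fun k _ => ?_
      fun_prop)]
    have key2 : ∀ j : Fin (n+1), (∫ t in (0:ℝ)..(2 * Real.pi), ∑ k : Fin (n+1),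
        ((starRingEnd ℂ) (ψ j) * ψ k * (amp n j p) * (amp n k p))
          * Complex.exp ((((k:ℕ):ℂ) - ((j:ℕ):ℂ)) * Complex.I * t))
        = ((starRingEnd ℂ) (ψ j) * ψ j * (amp n j p) * (amp n j p)) * (2 * Real.pi) := by
      intro j
      rw [intervalIntegral.integral_finset_sum (fun k _ => by
        apply Continuous.intervalIntegrable; fun_prop)]
      have hterm : ∀ k : Fin (n+1), (∫ t in (0:ℝ)..(2 * Real.pi),
          ((starRingEnd ℂ) (ψ j) * ψ k * (amp n j p) * (amp n k p))
            * Complex.exp ((((k:ℕ):ℂ) - ((j:ℕ):ℂ)) * Complex.I * t))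
          = ((starRingEnd ℂ) (ψ j) * ψ k * (amp n j p) * (amp n k p))
            * (if j = k then (2 * Real.pi : ℂ) else 0) := by
        intro k
        rw [intervalIntegral.integral_const_mul, integral_exp_orth]
        congr 1
        simp [Fin.val_eq_val]
      simp only [hterm]
      simp [Finset.sum_ite_eq, mul_ite, mul_zero]
    simp only [key2]
    rw [Finset.sum_congr rfl (fun j _ => by
      rw [show (starRingEnd ℂ) (ψ j) * ψ j * ((amp n j p : ℝ) : ℂ) * ((amp n j p : ℝ) : ℂ)
            * (2 * (Real.pi : ℂ))
          = ((starRingEnd ℂ) (ψ j) * ψ j) * (((amp n j p : ℝ) : ℂ) * ((amp n j p : ℝ) : ℂ)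
            * (2 * (Real.pi : ℂ))) from by ring, Complex.conj_mul'])]
    push_cast
    rw [Finset.mul_sum]
    refine Finset.sum_congr rfl fun j _ => ?_
    ring
  exact_mod_cast key

lemma sum_nsq_eq_one {n : ℕ} (ψ : EuclideanSpace ℂ (Fin (n + 1))) (hψ : ‖ψ‖ = 1) :
    ∑ j : Fin (n+1), ‖ψ j‖ ^ 2 = 1 := by
  have hnn : (0:ℝ) ≤ ∑ j : Fin (n+1), ‖ψ j‖ ^ 2 :=
    Finset.sum_nonneg fun j _ => sq_nonneg _
  have hs : Real.sqrt (∑ j : Fin (n+1), ‖ψ j‖ ^ 2) = 1 := by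
    rw [← EuclideanSpace.norm_eq]; exact hψ
  calc ∑ j : Fin (n+1), ‖ψ j‖ ^ 2 = Real.sqrt (∑ j : Fin (n+1), ‖ψ j‖ ^ 2) ^ 2 :=
        (Real.sq_sqrt hnn).symm
    _ = 1 := by rw [hs]; norm_num

lemma integral_amp_sq (n : ℕ) (j : Fin (n+1)) :
    (∫ p in (0:ℝ)..1, amp n j p ^ 2) = 1 / ((n:ℝ) + 1) := by
  have hj : (j:ℕ) ≤ n := Nat.lt_succ_iff.mp j.isLt
  have hcongr : ∀ p ∈ Set.uIcc (0:ℝ) 1,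
      amp n j p ^ 2 = (n.choose j : ℝ) * (p ^ (j:ℕ) * (1-p) ^ (n - (j:ℕ))) := by
    intro p hp
    rw [Set.uIcc_of_le (by norm_num)] at hp
    have hp0 : (0:ℝ) ≤ p := hp.1
    have hp1 : (0:ℝ) ≤ 1 - p := by linarith [hp.2]
    unfold amp
    rw [mul_pow, mul_pow, ← pow_mul, ← pow_mul, mul_comm ((j:ℕ)) 2, mul_comm (n - (j:ℕ)) 2,
      pow_mul, pow_mul, Real.sq_sqrt (by positivity : (0:ℝ) ≤ (n.choose j : ℝ)),
      Real.sq_sqrt hp0, Real.sq_sqrt hp1]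
    ring
  rw [intervalIntegral.integral_congr hcongr, intervalIntegral.integral_const_mul,
    integral_pow_mul_one_sub_pow, show (j:ℕ) + (n - (j:ℕ)) + 1 = n + 1 from by omega]
  have key : (n.choose j : ℝ) * (((j:ℕ)! : ℝ) * ((n - (j:ℕ))! : ℝ)) = (n ! : ℝ) := by
    exact_mod_cast congrArg (Nat.cast (R := ℝ))
      (by rw [← mul_assoc]; exact Nat.choose_mul_factorial_mul_factorial hj)
  have hnne : (n ! : ℝ) ≠ 0 := by exact_mod_cast Nat.factorial_ne_zero n
  have h1 : (((n+1)!) : ℝ) = ((n:ℝ)+1) * (n ! : ℝ) := by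
    rw [Nat.factorial_succ (n := n)]
    simp only [Nat.cast_mul, Nat.cast_add, Nat.cast_one]
  rw [h1]
  have h2 : (n.choose j : ℝ) * (((j:ℕ)! : ℝ) * ((n - (j:ℕ))! : ℝ) / (((n:ℝ)+1) * (n ! : ℝ)))
      = ((n.choose j : ℝ) * (((j:ℕ)! : ℝ) * ((n - (j:ℕ))! : ℝ))) / (((n:ℝ)+1) * (n ! : ℝ)) := by
    ring
  rw [h2, key]
  rw [div_eq_div_iff (by positivity) (by positivity)]
  ring

lemma sphereInt_nsq (n : ℕ) (ψ : EuclideanSpace ℂ (Fin (n + 1))) (hψ : ‖ψ‖ = 1) :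
    sphereInt (fun Ω => ‖ov n Ω ψ‖ ^ 2) = 1 / ((n:ℝ) + 1) := by
  unfold sphereInt
  have h2pi : (2 * Real.pi) ≠ 0 := by positivity
  have h1 : (fun p : ℝ => (∫ t in (0:ℝ)..(2 * Real.pi), ‖ov n (p, t) ψ‖ ^ 2) / (2 * Real.pi))
      = fun p : ℝ => ∑ j : Fin (n+1), ‖ψ j‖ ^ 2 * amp n j p ^ 2 := by
    funext p
    rw [phi_integral, mul_div_cancel_left₀ _ h2pi]
  rw [h1]
  rw [intervalIntegral.integral_finset_sum (fun j _ => by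
    apply Continuous.intervalIntegrable
    exact continuous_const.mul ((continuous_amp n j).pow 2))]
  have h2 : ∀ j : Fin (n+1), (∫ p in (0:ℝ)..1, ‖ψ j‖ ^ 2 * amp n j p ^ 2)
      = ‖ψ j‖ ^ 2 * (1 / ((n:ℝ) + 1)) := by
    intro j
    rw [intervalIntegral.integral_const_mul, integral_amp_sq]
  simp only [h2]
  rw [← Finset.sum_mul, sum_nsq_eq_one ψ hψ, one_mul]

/-- Entropy decomposition for a represented state. -/
theorem wehrl_decomposition (n : ℕ) (hn : 1 ≤ n)
    (ψ : EuclideanSpace ℂ (Fin (n + 1))) (hψ : ‖ψ‖ = 1)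
    (ω : Fin n → ℝ × ℝ) (c : ℝ) (hc : 0 < c) (hrep : Represents n ψ ω c) :
    wehrl n ψ =
      -((n : ℝ) + 1) *
          (∑ i : Fin n,
            sphereInt (fun Ω => ‖ov n Ω ψ‖ ^ 2 * Real.log (‖ov 1 Ω (bloch 1 (ω i))‖ ^ 2)))
        - Real.log c := by
  classical
  obtain ⟨hω, hrep2⟩ := hrep
  have contg : ∀ i : Fin n, Continuous fun Ω : ℝ × ℝ => ‖ov 1 Ω (bloch 1 (ω i))‖ ^ 2 :=
    fun i => continuous_nsq 1 (bloch 1 (ω i))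
  have contH : ∀ i : Fin n, Continuous fun Ω : ℝ × ℝ =>
      c * (‖ov 1 Ω (bloch 1 (ω i))‖ ^ 2 * Real.log (‖ov 1 Ω (bloch 1 (ω i))‖ ^ 2)) *
        ∏ j ∈ Finset.univ.erase i, ‖ov 1 Ω (bloch 1 (ω j))‖ ^ 2 := by
    intro i
    refine Continuous.mul (continuous_const.mul ?_) (continuous_finset_prod _ fun j _ => contg j)
    exact Real.continuous_mul_log.comp (contg i)
  have stepB : ∀ (i : Fin n) (Ω : ℝ × ℝ), IsSpherePt Ω →
      ‖ov n Ω ψ‖ ^ 2 * Real.log (‖ov 1 Ω (bloch 1 (ω i))‖ ^ 2)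
        = c * (‖ov 1 Ω (bloch 1 (ω i))‖ ^ 2 * Real.log (‖ov 1 Ω (bloch 1 (ω i))‖ ^ 2)) *
            ∏ j ∈ Finset.univ.erase i, ‖ov 1 Ω (bloch 1 (ω j))‖ ^ 2 := by
    intro i Ω hΩ
    by_cases h0 : ∃ j : Fin n, ‖ov 1 Ω (bloch 1 (ω j))‖ ^ 2 = 0
    · obtain ⟨j, hj⟩ := h0
      have hF : ‖ov n Ω ψ‖ ^ 2 = 0 := by
        rw [hrep2 Ω hΩ, Finset.prod_eq_zero (Finset.mem_univ j) hj, mul_zero]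
      by_cases hij : j = i
      · subst hij
        simp only [hF, hj, zero_mul, mul_zero]
      · rw [hF, zero_mul,
          Finset.prod_eq_zero (Finset.mem_erase.mpr ⟨hij, Finset.mem_univ j⟩) hj, mul_zero]
    · push_neg at h0
      rw [hrep2 Ω hΩ,
        ← Finset.mul_prod_erase Finset.univ _ (Finset.mem_univ i)]
      ring
  have stepA : ∀ Ω : ℝ × ℝ, IsSpherePt Ω →
      ‖ov n Ω ψ‖ ^ 2 * Real.log (‖ov n Ω ψ‖ ^ 2)
        = Real.log c * ‖ov n Ω ψ‖ ^ 2
          + ∑ i : Fin n, ‖ov n Ω ψ‖ ^ 2 * Real.log (‖ov 1 Ω (bloch 1 (ω i))‖ ^ 2) := by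
    intro Ω hΩ
    by_cases h0 : ∃ j : Fin n, ‖ov 1 Ω (bloch 1 (ω j))‖ ^ 2 = 0
    · obtain ⟨j, hj⟩ := h0
      have hF : ‖ov n Ω ψ‖ ^ 2 = 0 := by
        rw [hrep2 Ω hΩ, Finset.prod_eq_zero (Finset.mem_univ j) hj, mul_zero]
      simp only [hF, zero_mul, mul_zero, Finset.sum_const_zero, add_zero]
    · push_neg at h0
      have hprod : (∏ k : Fin n, ‖ov 1 Ω (bloch 1 (ω k))‖ ^ 2) ≠ 0 :=
        Finset.prod_ne_zero_iff.mpr fun j _ => h0 j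
      rw [hrep2 Ω hΩ, Real.log_mul (ne_of_gt hc) hprod,
        Real.log_prod (fun j _ => h0 j), mul_add, Finset.mul_sum]
      ring_nf
  have hAB : ∀ Ω : ℝ × ℝ, IsSpherePt Ω →
      ‖ov n Ω ψ‖ ^ 2 * Real.log (‖ov n Ω ψ‖ ^ 2)
        = Real.log c * ‖ov n Ω ψ‖ ^ 2
          + ∑ i : Fin n,
            c * (‖ov 1 Ω (bloch 1 (ω i))‖ ^ 2 * Real.log (‖ov 1 Ω (bloch 1 (ω i))‖ ^ 2)) *
              ∏ j ∈ Finset.univ.erase i, ‖ov 1 Ω (bloch 1 (ω j))‖ ^ 2 := by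
    intro Ω hΩ
    rw [stepA Ω hΩ]
    exact congrArg _ (Finset.sum_congr rfl fun i _ => stepB i Ω hΩ)
  unfold wehrl
  rw [sphereInt_congr hAB]
  rw [sphereInt_add (f := fun Ω => Real.log c * ‖ov n Ω ψ‖ ^ 2) (continuous_const.mul (continuous_nsq n ψ))
    (continuous_finset_sum _ fun i _ => contH i)]
  rw [sphereInt_const_mul, sphereInt_nsq n ψ hψ,
    sphereInt_sum Finset.univ _ (fun i => contH i)]
  rw [show (∑ i : Fin n, sphereInt fun Ω =>
      c * (‖ov 1 Ω (bloch 1 (ω i))‖ ^ 2 * Real.log (‖ov 1 Ω (bloch 1 (ω i))‖ ^ 2)) *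
        ∏ j ∈ Finset.univ.erase i, ‖ov 1 Ω (bloch 1 (ω j))‖ ^ 2)
      = ∑ i : Fin n,
        sphereInt (fun Ω => ‖ov n Ω ψ‖ ^ 2 * Real.log (‖ov 1 Ω (bloch 1 (ω i))‖ ^ 2)) from
    Finset.sum_congr rfl fun i _ => (sphereInt_congr (stepB i)).symm]
  have hne : ((n:ℝ) + 1) ≠ 0 := by positivity
  field_simp
  ring
end

section
/- Let ε, μ, ν ∈ [0,1] with ε + μ + ν < 3, and set x = (ε+μ+ν)/3 and c = 1/(1−x). Then c·( x − (εμ+εν+μν)/6 ) − ln c ≥ 0, with equality if and only if ε = μ = ν = 0. -/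
open MeasureTheory

lemma log_lt_aux (c : ℝ) (hc : 1 < c) : Real.log c < c/2 - 1/(2*c) := by
  have hmono : StrictMonoOn (fun t : ℝ => t/2 - 1/(2*t) - Real.log t) (Set.Ici 1) := by
    apply strictMonoOn_of_deriv_pos (convex_Ici 1)
    · intro t ht
      have ht1 : (1:ℝ) ≤ t := ht
      have ht0 : t ≠ 0 := by linarith
      have h2t : (2:ℝ)*t ≠ 0 := by positivity
      exact ContinuousAt.continuousWithinAt
        (((continuousAt_id.div_const 2).sub
          (continuousAt_const.div (by fun_prop) h2t)).sub (Real.continuousAt_log ht0))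
    · intro t ht
      rw [interior_Ici] at ht
      have ht1 : (1:ℝ) < t := ht
      have ht0 : t ≠ 0 := by linarith
      have h2t : (2:ℝ)*t ≠ 0 := by positivity
      have h1 : HasDerivAt (fun t : ℝ => t/2) (1/2) t := (hasDerivAt_id t).div_const 2
      have h2 : HasDerivAt (fun t : ℝ => 1/(2*t)) (-2/(2*t)^2) t := by
        simpa [one_div, Pi.inv_def] using (((hasDerivAt_id t).const_mul 2).inv h2t)
      have h3 : HasDerivAt Real.log t⁻¹ t := Real.hasDerivAt_log ht0
      have h := (h1.sub h2).sub h3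
      rw [(show HasDerivAt (fun t : ℝ => t/2 - 1/(2*t) - Real.log t) _ t from h).deriv]
      have heq : 1/2 - -2/(2*t)^2 - t⁻¹ = (t-1)^2/(2*t^2) := by field_simp; ring
      rw [heq]
      apply div_pos
      · have : t - 1 ≠ 0 := by linarith
        positivity
      · positivity
  have h := hmono (Set.mem_Ici.mpr le_rfl) (Set.mem_Ici.mpr hc.le) hc
  simp only [Real.log_one] at h
  have heq : (1:ℝ)/2 - 1/(2*1) - 0 = 0 := by norm_num
  rw [heq] at h
  linarith

/-- The scalar inequality underlying the proof of Lieb's conjecture for spin 3/2. -/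
theorem scalar_inequality_spin_three_halves (ε μ ν x c : ℝ)
    (hε : ε ∈ Set.Icc (0 : ℝ) 1) (hμ : μ ∈ Set.Icc (0 : ℝ) 1) (hν : ν ∈ Set.Icc (0 : ℝ) 1)
    (hsum : ε + μ + ν < 3) (hx : x = (ε + μ + ν) / 3) (hc : c = 1 / (1 - x)) :
    0 ≤ c * (x - (ε * μ + ε * ν + μ * ν) / 6) - Real.log c ∧
      (c * (x - (ε * μ + ε * ν + μ * ν) / 6) - Real.log c = 0 ↔ ε = 0 ∧ μ = 0 ∧ ν = 0) := by
  obtain ⟨hε0, hε1⟩ := hε; obtain ⟨hμ0, hμ1⟩ := hμ; obtain ⟨hν0, hν1⟩ := hν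
  have hx0 : 0 ≤ x := by rw [hx]; linarith
  have hx1 : x < 1 := by rw [hx]; linarith
  have h1x : 0 < 1 - x := by linarith
  have hcpos : 0 < c := by rw [hc]; positivity
  have hc1 : 1 ≤ c := by rw [hc, le_div_iff₀ h1x]; linarith
  have hid : c * (x - x^2/2) = c/2 - 1/(2*c) := by
    rw [hc]; field_simp; ring
  have hs : ε * μ + ε * ν + μ * ν ≤ 3 * x^2 := by
    rw [hx]; nlinarith [sq_nonneg (ε - μ), sq_nonneg (ε - ν), sq_nonneg (μ - ν)]
  have hsplit : c * (x - (ε * μ + ε * ν + μ * ν) / 6) - Real.log c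
      = (c/2 - 1/(2*c) - Real.log c) + c * (x^2/2 - (ε * μ + ε * ν + μ * ν)/6) := by
    rw [← hid]; ring
  have hterm2 : 0 ≤ c * (x^2/2 - (ε * μ + ε * ν + μ * ν)/6) :=
    mul_nonneg hcpos.le (by linarith)
  have hterm1 : 0 ≤ c/2 - 1/(2*c) - Real.log c := by
    rcases eq_or_lt_of_le hc1 with h | h
    · rw [← h]; norm_num
    · linarith [log_lt_aux c h]
  refine ⟨by rw [hsplit]; linarith, ?_, ?_⟩
  · intro h0
    have hxz : x = 0 := by
      by_contra hne
      have hxpos : 0 < x := lt_of_le_of_ne hx0 (Ne.symm hne)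
      have hcgt : 1 < c := by rw [hc, lt_div_iff₀ h1x]; linarith
      have := log_lt_aux c hcgt
      rw [hsplit] at h0
      linarith
    have hsum0 : ε + μ + ν = 0 := by rw [hx] at hxz; linarith
    exact ⟨by linarith, by linarith, by linarith⟩
  · rintro ⟨rfl, rfl, rfl⟩
    have hx' : x = 0 := by rw [hx]; ring
    subst hx'
    have hc' : c = 1 := by rw [hc]; norm_num
    subst hc'
    simp
end

section
/- Generalized Lieb inequality for integer powers: for every n ∈ ℕ, every integer s ≥ 1, and every unit vector ψ ∈ ℂ^(n+1), one has (n·s + 1) ∫ |⟨v_n(Ω), ψ⟩|^{2s} dΩ/4π ≤ 1; moreover, for s ≥ 2 equality holds if and only if ψ is a coherent state. -/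
open MeasureTheory

section LiebAux

open Finset Polynomial

noncomputable def Wgt (N : ℕ) (R : Polynomial ℂ) : ℝ :=
  ∑ m ∈ range (N + 1), ‖R.coeff m‖ ^ 2 / (N.choose m : ℝ)

def Tset (N M m : ℕ) : Finset (ℕ × ℕ) :=
  (range (N + 1) ×ˢ range (M + 1)).filter fun ij => ij.1 + ij.2 = m

lemma mem_Tset {N M m : ℕ} {ij : ℕ × ℕ} :
    ij ∈ Tset N M m ↔ ij.1 ≤ N ∧ ij.2 ≤ M ∧ ij.1 + ij.2 = m := by
  simp [Tset, Nat.lt_succ_iff, and_assoc]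

lemma sum_Tset (N M : ℕ) (F : ℕ × ℕ → ℝ) :
    ∑ m ∈ range (N + M + 1), ∑ ij ∈ Tset N M m, F ij
      = ∑ i ∈ range (N + 1), ∑ j ∈ range (M + 1), F (i, j) := by
  rw [← Finset.sum_product']
  exact Finset.sum_fiberwise_of_maps_to (fun x hx => by
    simp only [mem_product, mem_range, Nat.lt_succ_iff] at hx
    simp [Nat.lt_succ_iff, Nat.add_le_add hx.1 hx.2]) F

lemma vandermonde_Tset (N M m : ℕ) :
    ∑ ij ∈ Tset N M m, ((N.choose ij.1 : ℝ) * (M.choose ij.2 : ℝ)) = ((N + M).choose m : ℝ) := by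
  have h := Nat.add_choose_eq N M m
  have h2 : ∑ ij ∈ Finset.HasAntidiagonal.antidiagonal m, N.choose ij.1 * M.choose ij.2
      = ∑ ij ∈ Tset N M m, N.choose ij.1 * M.choose ij.2 := by
    refine (Finset.sum_subset ?_ ?_).symm
    · intro x hx
      rw [mem_Tset] at hx
      simp [Finset.HasAntidiagonal.mem_antidiagonal, hx.2.2]
    · intro x hx hx'
      rw [Finset.HasAntidiagonal.mem_antidiagonal] at hx
      rw [mem_Tset, hx] at hx'
      push_neg at hx'
      rcases le_or_gt x.1 N with h1 | h1
      · rcases le_or_gt x.2 M with h2 | h2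
        · exact absurd rfl (hx' h1 h2)
        · simp [Nat.choose_eq_zero_of_lt h2]
      · simp [Nat.choose_eq_zero_of_lt h1]
  have := h.trans h2
  exact_mod_cast (congrArg (fun x : ℕ => (x : ℝ)) this).symm

lemma coeff_mul_Tset {N M : ℕ} {R S : Polynomial ℂ} (hR : R.natDegree ≤ N)
    (hS : S.natDegree ≤ M) (m : ℕ) :
    (R * S).coeff m = ∑ ij ∈ Tset N M m, R.coeff ij.1 * S.coeff ij.2 := by
  rw [Polynomial.coeff_mul]
  refine (Finset.sum_subset ?_ ?_).symm
  · intro x hx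
    rw [mem_Tset] at hx
    simp [Finset.HasAntidiagonal.mem_antidiagonal, hx.2.2]
  · intro x hx hx'
    rw [Finset.HasAntidiagonal.mem_antidiagonal] at hx
    rw [mem_Tset, hx] at hx'
    push_neg at hx'
    rcases le_or_gt x.1 N with h1 | h1
    · rcases le_or_gt x.2 M with h2 | h2
      · exact absurd rfl (hx' h1 h2)
      · rw [Polynomial.coeff_eq_zero_of_natDegree_lt (lt_of_le_of_lt hS h2), mul_zero]
    · rw [Polynomial.coeff_eq_zero_of_natDegree_lt (lt_of_le_of_lt hR h1), zero_mul]

lemma cs_step {N M : ℕ} (R S : Polynomial ℂ) (hR : R.natDegree ≤ N) (hS : S.natDegree ≤ M)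
    {m : ℕ} (hm : m ≤ N + M) :
    ‖(R * S).coeff m‖ ^ 2 / ((N + M).choose m : ℝ)
      ≤ ∑ ij ∈ Tset N M m, ‖R.coeff ij.1‖ ^ 2 * ‖S.coeff ij.2‖ ^ 2
          / ((N.choose ij.1 : ℝ) * (M.choose ij.2 : ℝ)) ∧
    (‖(R * S).coeff m‖ ^ 2 / ((N + M).choose m : ℝ)
        = ∑ ij ∈ Tset N M m, ‖R.coeff ij.1‖ ^ 2 * ‖S.coeff ij.2‖ ^ 2
          / ((N.choose ij.1 : ℝ) * (M.choose ij.2 : ℝ)) →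
      ∃ lam : ℂ, ∀ ij ∈ Tset N M m,
        R.coeff ij.1 * S.coeff ij.2 = lam * ((N.choose ij.1 : ℂ) * (M.choose ij.2 : ℂ))) := by
  classical
  set t := Tset N M m with ht
  set w : ℕ × ℕ → ℝ := fun ij => (N.choose ij.1 : ℝ) * (M.choose ij.2 : ℝ) with hwdef
  have hw : ∀ ij ∈ t, 0 < w ij := by
    intro ij hij
    rw [ht, mem_Tset] at hij
    have h1 := Nat.choose_pos hij.1
    have h2 := Nat.choose_pos hij.2.1
    positivity
  set y : EuclideanSpace ℂ t := WithLp.toLp 2 fun ij => ((Real.sqrt (w ij) : ℝ) : ℂ) with hy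
  set x : EuclideanSpace ℂ t := WithLp.toLp 2 fun ij =>
    R.coeff ij.1.1 * S.coeff ij.1.2 / ((Real.sqrt (w ij) : ℝ) : ℂ) with hx
  have hsqrt_ne : ∀ ij : t, ((Real.sqrt (w ij) : ℝ) : ℂ) ≠ 0 := by
    intro ij
    rw [Ne, Complex.ofReal_eq_zero]
    exact (Real.sqrt_pos.2 (hw ij ij.2)).ne'
  have hinner : (inner ℂ y x : ℂ) = (R * S).coeff m := by
    simp only [PiLp.inner_apply, RCLike.inner_apply']
    have : ∀ ij : t, (starRingEnd ℂ) (y ij) * x ij = R.coeff ij.1.1 * S.coeff ij.1.2 := by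
      intro ij
      rw [hy, hx]
      simp only [PiLp.toLp_apply, Complex.conj_ofReal]
      rw [mul_div_assoc', mul_comm, mul_div_assoc, div_self (hsqrt_ne ij), mul_one]
    rw [Finset.sum_congr rfl fun ij _ => this ij,
      Finset.sum_coe_sort t (fun ij => R.coeff ij.1 * S.coeff ij.2)]
    exact (coeff_mul_Tset hR hS m).symm
  have hny : ‖y‖ ^ 2 = ((N + M).choose m : ℝ) := by
    rw [EuclideanSpace.norm_eq, Real.sq_sqrt (by positivity)]
    have : ∀ ij : t, ‖y ij‖ ^ 2 = w ij := by
      intro ij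
      rw [hy, PiLp.toLp_apply]
      rw [Complex.norm_real, Real.norm_eq_abs, sq_abs, Real.sq_sqrt (hw ij ij.2).le]
    rw [Finset.sum_congr rfl fun ij _ => this ij, Finset.sum_coe_sort t w]
    exact vandermonde_Tset N M m
  have hnx : ‖x‖ ^ 2 = ∑ ij ∈ t, ‖R.coeff ij.1‖ ^ 2 * ‖S.coeff ij.2‖ ^ 2 / w ij := by
    rw [EuclideanSpace.norm_eq, Real.sq_sqrt (by positivity)]
    have : ∀ ij : t, ‖x ij‖ ^ 2 = ‖R.coeff ij.1.1‖ ^ 2 * ‖S.coeff ij.1.2‖ ^ 2 / w ij := by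
      intro ij
      rw [hx, PiLp.toLp_apply]
      rw [norm_div, norm_mul, Complex.norm_real, Real.norm_eq_abs, div_pow, mul_pow,
        sq_abs, Real.sq_sqrt (hw ij ij.2).le]
    rw [Finset.sum_congr rfl fun ij _ => this ij,
      Finset.sum_coe_sort t (fun ij => ‖R.coeff ij.1‖ ^ 2 * ‖S.coeff ij.2‖ ^ 2 / w ij)]
  have hC : (0 : ℝ) < ((N + M).choose m : ℝ) := by exact_mod_cast Nat.choose_pos hm
  have hcs : ‖(R * S).coeff m‖ ^ 2 ≤ ((N + M).choose m : ℝ) *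
      ∑ ij ∈ t, ‖R.coeff ij.1‖ ^ 2 * ‖S.coeff ij.2‖ ^ 2 / w ij := by
    have h1 := norm_inner_le_norm (𝕜 := ℂ) y x
    have h2 : ‖(inner ℂ y x : ℂ)‖ ^ 2 ≤ (‖y‖ * ‖x‖) ^ 2 := by
      apply pow_le_pow_left₀ (norm_nonneg _) h1
    rw [hinner, mul_pow, hny, hnx] at h2
    exact h2
  constructor
  · rw [div_le_iff₀ hC]
    calc ‖(R * S).coeff m‖ ^ 2 ≤ _ := hcs
    _ = (∑ ij ∈ t, ‖R.coeff ij.1‖ ^ 2 * ‖S.coeff ij.2‖ ^ 2 / w ij) * ((N + M).choose m : ℝ) := by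
        ring
  · intro he
    have he' : ‖(R * S).coeff m‖ ^ 2 = ‖y‖ ^ 2 * ‖x‖ ^ 2 := by
      rw [hny, hnx]
      rw [div_eq_iff hC.ne'] at he
      rw [he]; ring
    by_cases hx0 : x = 0
    · refine ⟨0, fun ij hij => ?_⟩
      have h0 : R.coeff ij.1 * S.coeff ij.2 / ((Real.sqrt (w ij) : ℝ) : ℂ) = 0 := by
        have := congrArg (fun v : EuclideanSpace ℂ t => v ⟨ij, hij⟩) hx0
        simpa [hx] using this
      rcases _root_.div_eq_zero_iff.1 h0 with h | h
      · simp [h]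
      · exact absurd h (hsqrt_ne ⟨ij, hij⟩)
    · have hy0 : y ≠ 0 := by
        intro h
        have h0 : (0:ℝ) = (((N + M).choose m : ℕ) : ℝ) := by
          rw [← hny, h, norm_zero]; norm_num
        exact hC.ne h0
      have heq : ‖(inner ℂ y x : ℂ)‖ = ‖y‖ * ‖x‖ := by
        have h1 : ‖(inner ℂ y x : ℂ)‖ ^ 2 = (‖y‖ * ‖x‖) ^ 2 := by
          rw [hinner, mul_pow, he']
        have h2 : (0:ℝ) ≤ ‖(inner ℂ y x : ℂ)‖ := norm_nonneg _
        have h3 : (0:ℝ) ≤ ‖y‖ * ‖x‖ := by positivity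
        nlinarith
      obtain ⟨r, _, hr⟩ := (norm_inner_eq_norm_iff (𝕜 := ℂ) hy0 hx0).1 heq
      refine ⟨r, fun ij hij => ?_⟩
      have h1 : R.coeff ij.1 * S.coeff ij.2 / ((Real.sqrt (w ij) : ℝ) : ℂ)
          = r * ((Real.sqrt (w ij) : ℝ) : ℂ) := by
        have := congrArg (fun v : EuclideanSpace ℂ t => v ⟨ij, hij⟩) hr
        simpa [hx, hy] using this
      rw [div_eq_iff (hsqrt_ne ⟨ij, hij⟩)] at h1
      rw [h1, mul_assoc, ← Complex.ofReal_mul, Real.mul_self_sqrt (hw ij hij).le]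
      simp only [hwdef]
      push_cast
      ring

lemma Wgt_nonneg (N : ℕ) (R : Polynomial ℂ) : 0 ≤ Wgt N R := by
  apply Finset.sum_nonneg; intro m _; positivity

lemma Wgt_mul_le {N M : ℕ} {R S : Polynomial ℂ} (hR : R.natDegree ≤ N)
    (hS : S.natDegree ≤ M) : Wgt (N + M) (R * S) ≤ Wgt N R * Wgt M S := by
  have h1 : Wgt (N + M) (R * S) ≤ ∑ m ∈ range (N + M + 1), ∑ ij ∈ Tset N M m,
      ‖R.coeff ij.1‖ ^ 2 * ‖S.coeff ij.2‖ ^ 2 / ((N.choose ij.1 : ℝ) * (M.choose ij.2 : ℝ)) := by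
    apply Finset.sum_le_sum
    intro m hm
    exact (cs_step R S hR hS (Nat.lt_succ_iff.1 (mem_range.1 hm))).1
  rw [sum_Tset] at h1
  refine h1.trans_eq ?_
  rw [Wgt, Wgt, Finset.sum_mul_sum]
  apply Finset.sum_congr rfl; intro i _
  apply Finset.sum_congr rfl; intro j _
  rw [div_mul_div_comm]

lemma lam_of_eq {n : ℕ} {Q : Polynomial ℂ} (hQ : Q.natDegree ≤ n)
    (he : Wgt (n + n) (Q * Q) = Wgt n Q * Wgt n Q) :
    ∀ m, ∃ lam : ℂ, ∀ ij ∈ Tset n n m,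
      Q.coeff ij.1 * Q.coeff ij.2 = lam * ((n.choose ij.1 : ℂ) * (n.choose ij.2 : ℂ)) := by
  intro m
  rcases le_or_gt m (n + n) with hm | hm
  · have hle : ∀ k ∈ range (n + n + 1),
        ‖(Q * Q).coeff k‖ ^ 2 / ((n + n).choose k : ℝ) ≤ ∑ ij ∈ Tset n n k,
          ‖Q.coeff ij.1‖ ^ 2 * ‖Q.coeff ij.2‖ ^ 2
            / ((n.choose ij.1 : ℝ) * (n.choose ij.2 : ℝ)) :=
      fun k hk => (cs_step Q Q hQ hQ (Nat.lt_succ_iff.1 (mem_range.1 hk))).1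
    have hsum : ∑ k ∈ range (n + n + 1), ‖(Q * Q).coeff k‖ ^ 2 / ((n + n).choose k : ℝ)
        = ∑ k ∈ range (n + n + 1), ∑ ij ∈ Tset n n k,
          ‖Q.coeff ij.1‖ ^ 2 * ‖Q.coeff ij.2‖ ^ 2
            / ((n.choose ij.1 : ℝ) * (n.choose ij.2 : ℝ)) := by
      rw [show (∑ k ∈ range (n + n + 1), ‖(Q * Q).coeff k‖ ^ 2 / ((n + n).choose k : ℝ))
        = Wgt (n + n) (Q * Q) from rfl, he, sum_Tset]
      rw [Wgt, Finset.sum_mul_sum]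
      apply Finset.sum_congr rfl; intro i _
      apply Finset.sum_congr rfl; intro j _
      rw [div_mul_div_comm]
    have := (Finset.sum_eq_sum_iff_of_le hle).1 hsum m (mem_range.2 (Nat.lt_succ_iff.2 hm))
    exact (cs_step Q Q hQ hQ hm).2 this
  · refine ⟨0, fun ij hij => ?_⟩
    rw [mem_Tset] at hij
    omega

lemma support_structure {n : ℕ} {Q : Polynomial ℂ} (hQ : Q.natDegree ≤ n) (hQne : Q ≠ 0)
    (hlam : ∀ m, ∃ lam : ℂ, ∀ ij ∈ Tset n n m,
      Q.coeff ij.1 * Q.coeff ij.2 = lam * ((n.choose ij.1 : ℂ) * (n.choose ij.2 : ℂ))) :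
    (∀ k < n, Q.coeff k = 0) ∨ (∀ k, 0 < k → Q.coeff k = 0) ∨
      (∃ u0 r : ℂ, u0 ≠ 0 ∧ r ≠ 0 ∧ ∀ k ≤ n, Q.coeff k = (n.choose k : ℂ) * (u0 * r ^ k)) := by
  classical
  set u : ℕ → ℂ := fun k => Q.coeff k / (n.choose k : ℂ) with hu
  have hchoose : ∀ k, k ≤ n → ((n.choose k : ℂ) ≠ 0) := by
    intro k hk
    exact_mod_cast Nat.cast_ne_zero.2 (Nat.choose_pos hk).ne'
  have hu_ne : ∀ k, k ≤ n → (u k ≠ 0 ↔ Q.coeff k ≠ 0) := by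
    intro k hk
    simp only [hu, ne_eq, _root_.div_eq_zero_iff, not_or]
    exact ⟨fun h => h.1, fun h => ⟨h, hchoose k hk⟩⟩
  have H : ∀ i j i' j', i ≤ n → j ≤ n → i' ≤ n → j' ≤ n → i + j = i' + j' →
      u i * u j = u i' * u j' := by
    intro i j i' j' hi hj hi' hj' hsum
    obtain ⟨lam, hl⟩ := hlam (i + j)
    have h1 := hl (i, j) (mem_Tset.2 ⟨hi, hj, rfl⟩)
    have h2 := hl (i', j') (mem_Tset.2 ⟨hi', hj', hsum.symm⟩)
    have e1 : u i * u j = lam := by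
      simp only [hu]
      rw [div_mul_div_comm, h1, mul_div_assoc,
        div_self (mul_ne_zero (hchoose i hi) (hchoose j hj)), mul_one]
    have e2 : u i' * u j' = lam := by
      simp only [hu]
      rw [div_mul_div_comm, h2, mul_div_assoc,
        div_self (mul_ne_zero (hchoose i' hi') (hchoose j' hj')), mul_one]
    rw [e1, e2]
  set s := (range (n + 1)).filter (fun k => Q.coeff k ≠ 0) with hs
  have hsne : s.Nonempty := by
    refine ⟨Q.natDegree, ?_⟩
    rw [hs, mem_filter, mem_range]
    exact ⟨Nat.lt_succ_iff.2 hQ, Polynomial.leadingCoeff_ne_zero.2 hQne⟩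
  set A := s.min' hsne with hA
  set B := s.max' hsne with hB
  have hmemA : A ∈ s := s.min'_mem hsne
  have hmemB : B ∈ s := s.max'_mem hsne
  have hAn : A ≤ n := by
    have := (mem_filter.1 hmemA).1; rw [mem_range] at this; omega
  have hBn : B ≤ n := by
    have := (mem_filter.1 hmemB).1; rw [mem_range] at this; omega
  have hAB : A ≤ B := s.min'_le B hmemB
  have huA : u A ≠ 0 := (hu_ne A hAn).2 (mem_filter.1 hmemA).2
  have huB : u B ≠ 0 := (hu_ne B hBn).2 (mem_filter.1 hmemB).2
  have hzero : ∀ k, k ≤ n → k ∉ s → u k = 0 := by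
    intro k hk hks
    rw [hu]
    have : Q.coeff k = 0 := by
      by_contra h
      exact hks (mem_filter.2 ⟨mem_range.2 (Nat.lt_succ_iff.2 hk), h⟩)
    simp [this]
  have hzeroA : ∀ k, k < A → u k = 0 := by
    intro k hk
    apply hzero k (le_trans (le_of_lt (lt_of_lt_of_le hk hAB)) hBn)
    intro hks
    exact absurd (s.min'_le k hks) (not_le.2 hk)
  have hzeroB : ∀ k, B < k → k ≤ n → u k = 0 := by
    intro k hk hkn
    apply hzero k hkn
    intro hks
    exact absurd (s.le_max' k hks) (not_le.2 hk)
  -- every index between A and B is in the support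
  have hmid : ∀ k, A ≤ k → k ≤ B → u k ≠ 0 := by
    intro k h1 h2
    have hk_n : k ≤ n := le_trans h2 hBn
    have hother : A + B - k ≤ n := by omega
    have := H A B k (A + B - k) hAn hBn hk_n hother (by omega)
    intro h0
    rw [h0, zero_mul] at this
    exact (mul_ne_zero huA huB) this
  rcases eq_or_lt_of_le hAB with hABeq | hABlt
  · -- single point support
    rcases Nat.eq_zero_or_pos A with hA0 | hApos
    · right; left
      intro k hk
      rcases le_or_gt k n with hkn | hkn
      · by_contra h
        have hks : k ∈ s := mem_filter.2 ⟨mem_range.2 (Nat.lt_succ_iff.2 hkn), h⟩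
        have := s.min'_le k hks
        have := s.le_max' k hks
        omega
      · exact Polynomial.coeff_eq_zero_of_natDegree_lt (lt_of_le_of_lt hQ hkn)
    · rcases eq_or_lt_of_le hAn with hAneq | hAnlt
      · left
        intro k hk
        by_contra h
        have hks : k ∈ s := mem_filter.2 ⟨mem_range.2 (by omega), h⟩
        have := s.min'_le k hks
        have := s.le_max' k hks
        omega
      · -- 0 < A = B < n : contradiction
        exfalso
        have h1 := H A A (A - 1) (A + 1) hAn hAn (by omega) (by omega) (by omega)
        have h2 : u (A - 1) = 0 := hzeroA _ (by omega)
        have h3 : u A * u A ≠ 0 := mul_ne_zero huA huA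
        rw [h1, h2, zero_mul] at h3
        exact h3 rfl
  · -- A < B : show A = 0 and B = n, full geometric
    have hA0 : A = 0 := by
      by_contra h
      have hApos : 0 < A := Nat.pos_of_ne_zero h
      have h1 := H A A (A - 1) (A + 1) hAn hAn (by omega) (by omega) (by omega)
      have h2 : u (A - 1) = 0 := hzeroA _ (by omega)
      have h3 : u A * u A ≠ 0 := mul_ne_zero huA huA
      rw [h1, h2, zero_mul] at h3
      exact h3 rfl
    have hBn' : B = n := by
      by_contra h
      have hBlt : B < n := lt_of_le_of_ne hBn h
      have h1 := H B B (B - 1) (B + 1) hBn hBn (by omega) (by omega) (by omega)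
      have h2 : u (B + 1) = 0 := hzeroB _ (by omega) (by omega)
      have h3 : u B * u B ≠ 0 := mul_ne_zero huB huB
      rw [h1, h2, mul_zero] at h3
      exact h3 rfl
    right; right
    have hn1 : 1 ≤ n := by omega
    have hu0 : u 0 ≠ 0 := hmid 0 (by omega) (by omega)
    have hu1 : u 1 ≠ 0 := hmid 1 (by omega) (by omega)
    refine ⟨u 0, u 1 / u 0, hu0, div_ne_zero hu1 hu0, ?_⟩
    have key : ∀ k, k ≤ n → u k = u 0 * (u 1 / u 0) ^ k := by
      intro k
      induction k with
      | zero => intro _; simp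
      | succ k ih =>
        intro hk
        have hk' : k ≤ n := by omega
        have h1 := H (k + 1) 0 k 1 hk (by omega) hk' hn1 (by omega)
        have : u (k + 1) = u k * u 1 / u 0 := by
          rw [eq_div_iff hu0]; exact h1
        rw [this, ih hk']
        ring
    intro k hk
    have h2 : Q.coeff k = (n.choose k : ℂ) * u k := by
      simp only [hu]
      rw [mul_comm, div_mul_cancel₀ _ (hchoose k hk)]
    rw [h2, key k hk]

section Part2Test
open Finset Polynomial

noncomputable def Qpoly (n : ℕ) (ψ : EuclideanSpace ℂ (Fin (n + 1))) : Polynomial ℂ :=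
  ∑ k : Fin (n + 1), Polynomial.C ((Real.sqrt (n.choose k) : ℂ) * ψ k) * Polynomial.X ^ (k : ℕ)

lemma Qpoly_natDegree_le (n : ℕ) (ψ : EuclideanSpace ℂ (Fin (n + 1))) :
    (Qpoly n ψ).natDegree ≤ n := by
  apply Polynomial.natDegree_sum_le_of_forall_le
  intro k _
  exact le_trans (Polynomial.natDegree_C_mul_X_pow_le _ _) (Nat.lt_succ_iff.1 k.2)

lemma Qpoly_coeff {n : ℕ} (ψ : EuclideanSpace ℂ (Fin (n + 1))) {m : ℕ} (hm : m ≤ n) :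
    (Qpoly n ψ).coeff m
      = (Real.sqrt (n.choose m) : ℂ) * ψ ⟨m, Nat.lt_succ_iff.2 hm⟩ := by
  rw [Qpoly, Polynomial.finset_sum_coeff]
  simp only [Polynomial.coeff_C_mul, Polynomial.coeff_X_pow, mul_ite, mul_one, mul_zero]
  rw [Finset.sum_eq_single (⟨m, Nat.lt_succ_iff.2 hm⟩ : Fin (n + 1))]
  · simp
  · intro k _ hk
    rw [if_neg]
    intro h
    exact hk (Fin.ext h.symm)
  · intro h
    exact absurd (Finset.mem_univ _) h

lemma Qpoly_coeff_norm_sq {n : ℕ} (ψ : EuclideanSpace ℂ (Fin (n + 1))) {m : ℕ} (hm : m ≤ n) :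
    ‖(Qpoly n ψ).coeff m‖ ^ 2 = (n.choose m : ℝ) * ‖ψ ⟨m, Nat.lt_succ_iff.2 hm⟩‖ ^ 2 := by
  rw [Qpoly_coeff ψ hm, norm_mul, mul_pow, Complex.norm_real, Real.norm_eq_abs, sq_abs,
    Real.sq_sqrt (by positivity)]

lemma Wgt_Qpoly {n : ℕ} (ψ : EuclideanSpace ℂ (Fin (n + 1))) :
    Wgt n (Qpoly n ψ) = ‖ψ‖ ^ 2 := by
  have h1 : ‖ψ‖ ^ 2 = ∑ k : Fin (n + 1), ‖ψ k‖ ^ 2 := by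
    rw [EuclideanSpace.norm_eq, Real.sq_sqrt (by positivity)]
  rw [h1, Wgt]
  rw [← Fin.sum_univ_eq_sum_range (fun m => ‖(Qpoly n ψ).coeff m‖ ^ 2 / (n.choose m : ℝ))]
  apply Finset.sum_congr rfl
  intro k _
  have hk : (k : ℕ) ≤ n := Nat.lt_succ_iff.1 k.2
  rw [Qpoly_coeff_norm_sq ψ hk]
  have hc : (0:ℝ) < (n.choose (k:ℕ) : ℝ) := by exact_mod_cast Nat.choose_pos hk
  rw [mul_comm, mul_div_assoc, div_self hc.ne', mul_one]

lemma coeff_linear_pow (α β : ℂ) (N m : ℕ) (hm : m ≤ N) :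
    ((Polynomial.C α * Polynomial.X + Polynomial.C β) ^ N).coeff m
      = (N.choose m : ℂ) * (α ^ m * β ^ (N - m)) := by
  rw [add_pow]
  rw [Polynomial.finset_sum_coeff]
  have hterm : ∀ k, (Polynomial.C α * Polynomial.X) ^ k * Polynomial.C β ^ (N - k)
      * (N.choose k : Polynomial ℂ)
      = Polynomial.C (α ^ k * β ^ (N - k) * (N.choose k : ℂ)) * Polynomial.X ^ k := by
    intro k
    rw [mul_pow, ← Polynomial.C_pow, ← Polynomial.C_pow, ← Polynomial.C_eq_natCast,
      Polynomial.C_mul, Polynomial.C_mul]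
    ring
  rw [Finset.sum_congr rfl fun k _ => by rw [hterm k]]
  simp only [Polynomial.coeff_C_mul, Polynomial.coeff_X_pow, mul_ite, mul_one, mul_zero]
  rw [Finset.sum_eq_single m]
  · simp; ring
  · intro k _ hk
    rw [if_neg (fun h => hk h.symm)]
  · intro h
    exact absurd (Finset.mem_range.2 (Nat.lt_succ_iff.2 hm)) h

lemma linear_pow_natDegree_le (α β : ℂ) (N : ℕ) :
    ((Polynomial.C α * Polynomial.X + Polynomial.C β) ^ N).natDegree ≤ N := by
  have h1 : (Polynomial.C α * Polynomial.X + Polynomial.C β).natDegree ≤ 1 := by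
    apply le_trans (Polynomial.natDegree_add_le _ _)
    simp only [max_le_iff]
    constructor
    · calc (Polynomial.C α * Polynomial.X).natDegree
          = (Polynomial.C α * Polynomial.X ^ 1).natDegree := by rw [pow_one]
        _ ≤ 1 := Polynomial.natDegree_C_mul_X_pow_le _ _
    · simp
  calc ((Polynomial.C α * Polynomial.X + Polynomial.C β) ^ N).natDegree
      ≤ N * 1 := Polynomial.natDegree_pow_le_of_le N h1
    _ = N := mul_one N

lemma norm_bloch_sq {n : ℕ} {Ω : ℝ × ℝ} (h0 : 0 ≤ Ω.1) (h1 : Ω.1 ≤ 1) (k : Fin (n + 1)) :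
    ‖bloch n Ω k‖ ^ 2 = (n.choose (k : ℕ) : ℝ) * Ω.1 ^ (k : ℕ) * (1 - Ω.1) ^ (n - (k : ℕ)) := by
  rw [bloch, PiLp.toLp_apply]
  rw [norm_mul]
  have hexp : ‖Complex.exp (-((k : ℕ) : ℂ) * Complex.I * (Ω.2 : ℂ))‖ = 1 := by
    rw [Complex.norm_exp]
    have hre : (-((k : ℕ) : ℂ) * Complex.I * (Ω.2 : ℂ)).re = 0 := by simp
    rw [hre, Real.exp_zero]
  rw [hexp, mul_one, Complex.norm_real, Real.norm_eq_abs, sq_abs]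
  rw [mul_pow, mul_pow, Real.sq_sqrt (by positivity), pow_right_comm,
    Real.sq_sqrt h0, pow_right_comm, Real.sq_sqrt (by linarith)]

lemma norm_bloch {n : ℕ} {Ω : ℝ × ℝ} (hΩ : IsSpherePt Ω) : ‖bloch n Ω‖ = 1 := by
  obtain ⟨⟨h0, h1⟩, _⟩ := hΩ
  rw [EuclideanSpace.norm_eq]
  have : ∑ k : Fin (n + 1), ‖bloch n Ω k‖ ^ 2 = 1 := by
    rw [Finset.sum_congr rfl fun k _ => norm_bloch_sq h0 h1 k]
    rw [Fin.sum_univ_eq_sum_range (fun k => (n.choose k : ℝ) * Ω.1 ^ k * (1 - Ω.1) ^ (n - k))]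
    have hb := add_pow Ω.1 (1 - Ω.1) n
    have h2 : (Ω.1 + (1 - Ω.1)) = 1 := by ring
    rw [h2, one_pow] at hb
    have hcomm : ∑ k ∈ Finset.range (n + 1), (n.choose k : ℝ) * Ω.1 ^ k * (1 - Ω.1) ^ (n - k)
        = ∑ k ∈ Finset.range (n + 1), Ω.1 ^ k * (1 - Ω.1) ^ (n - k) * (n.choose k : ℝ) := by
      apply Finset.sum_congr rfl; intro k _; ring
    rw [hcomm]
    exact hb.symm
  rw [this, Real.sqrt_one]

lemma coherent_of_smul {n : ℕ} {ψ : EuclideanSpace ℂ (Fin (n + 1))} {Ω : ℝ × ℝ}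
    (hΩ : IsSpherePt Ω) (c : ℂ) (hc : ψ = c • bloch n Ω) (hψ : ‖ψ‖ = 1) :
    IsCoherent n ψ := by
  have hbn := norm_bloch (n := n) hΩ
  have hcn : ‖c‖ = 1 := by
    rw [hc, norm_smul, hbn, mul_one] at hψ; exact hψ
  refine ⟨c.arg, Ω, hΩ, ?_⟩
  rw [hc]
  congr 1
  have h2 := Complex.norm_mul_exp_arg_mul_I c
  have h3 : ((‖c‖ : ℝ) : ℂ) = 1 := by
    rw [hcn, Complex.ofReal_one]
  rw [h3, one_mul] at h2
  exact h2.symm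

lemma Qpoly_smul_bloch (n : ℕ) (θ : ℝ) (Ω : ℝ × ℝ) :
    Qpoly n (Complex.exp ((θ : ℂ) * Complex.I) • bloch n Ω)
      = Polynomial.C (Complex.exp ((θ : ℂ) * Complex.I)) *
        (Polynomial.C ((Real.sqrt Ω.1 : ℂ) * Complex.exp (-(Ω.2 : ℂ) * Complex.I)) * Polynomial.X
          + Polynomial.C ((Real.sqrt (1 - Ω.1) : ℂ))) ^ n := by
  apply Polynomial.ext; intro m
  rcases le_or_gt m n with hm | hm
  · rw [Qpoly_coeff _ hm, Polynomial.coeff_C_mul, coeff_linear_pow _ _ _ _ hm]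
    have happ : (Complex.exp ((θ : ℂ) * Complex.I) • bloch n Ω) ⟨m, Nat.lt_succ_iff.2 hm⟩
        = Complex.exp ((θ : ℂ) * Complex.I) * bloch n Ω ⟨m, Nat.lt_succ_iff.2 hm⟩ := rfl
    rw [happ, bloch, PiLp.toLp_apply]
    have hexp : Complex.exp (-((m : ℕ) : ℂ) * Complex.I * (Ω.2 : ℂ))
        = Complex.exp (-(Ω.2 : ℂ) * Complex.I) ^ m := by
      rw [← Complex.exp_nat_mul]; congr 1; push_cast; ring
    rw [hexp, mul_pow]
    have hCC : ((Real.sqrt (n.choose m) : ℝ) : ℂ) * ((Real.sqrt (n.choose m) : ℝ) : ℂ)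
        = ((n.choose m : ℕ) : ℂ) := by
      rw [← Complex.ofReal_mul, Real.mul_self_sqrt (by positivity)]
      norm_num
    push_cast at hCC ⊢
    linear_combination (Complex.exp ((θ : ℂ) * Complex.I) * ((Real.sqrt Ω.1 : ℝ) : ℂ) ^ m *
      ((Real.sqrt (1 - Ω.1) : ℝ) : ℂ) ^ (n - m) *
      Complex.exp (-(Ω.2 : ℂ) * Complex.I) ^ m) * hCC
  · rw [Polynomial.coeff_eq_zero_of_natDegree_lt (lt_of_le_of_lt (Qpoly_natDegree_le _ _) hm),
      Polynomial.coeff_C_mul,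
      Polynomial.coeff_eq_zero_of_natDegree_lt (lt_of_le_of_lt (linear_pow_natDegree_le _ _ _) hm),
      mul_zero]

lemma Wgt_coherent_pow {n : ℕ} {θ : ℝ} {Ω : ℝ × ℝ} (hΩ : IsSpherePt Ω) (s : ℕ) :
    Wgt (n * s) ((Qpoly n (Complex.exp ((θ : ℂ) * Complex.I) • bloch n Ω)) ^ s) = 1 := by
  obtain ⟨⟨h0, h1⟩, _⟩ := hΩ
  rw [Qpoly_smul_bloch, mul_pow, ← Polynomial.C_pow, ← pow_mul]
  rw [Wgt]
  have hterm : ∀ m ∈ Finset.range (n * s + 1),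
      ‖(Polynomial.C (Complex.exp ((θ : ℂ) * Complex.I) ^ s) *
        (Polynomial.C ((Real.sqrt Ω.1 : ℂ) * Complex.exp (-(Ω.2 : ℂ) * Complex.I)) * Polynomial.X
          + Polynomial.C ((Real.sqrt (1 - Ω.1) : ℂ))) ^ (n * s)).coeff m‖ ^ 2
        / ((n * s).choose m : ℝ)
      = Ω.1 ^ m * (1 - Ω.1) ^ (n * s - m) * ((n * s).choose m : ℝ) := by
    intro m hm
    have hm' := Nat.lt_succ_iff.1 (Finset.mem_range.1 hm)
    rw [Polynomial.coeff_C_mul, coeff_linear_pow _ _ _ _ hm']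
    rw [norm_mul, norm_mul, norm_mul, norm_pow, norm_pow, norm_pow, norm_mul]
    have e1 : ‖Complex.exp ((θ : ℂ) * Complex.I)‖ = 1 := Complex.norm_exp_ofReal_mul_I θ
    have e2 : ‖Complex.exp (-(Ω.2 : ℂ) * Complex.I)‖ = 1 := by
      rw [show (-(Ω.2 : ℂ)) = ((-Ω.2 : ℝ) : ℂ) by push_cast; ring]
      exact Complex.norm_exp_ofReal_mul_I _
    rw [e1, e2]
    simp only [one_pow, mul_one, one_mul]
    rw [Complex.norm_natCast, Complex.norm_real, Complex.norm_real, Real.norm_eq_abs,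
      Real.norm_eq_abs, abs_of_nonneg (Real.sqrt_nonneg _), abs_of_nonneg (Real.sqrt_nonneg _)]
    have hC : (0 : ℝ) < ((n * s).choose m : ℝ) := by exact_mod_cast Nat.choose_pos hm'
    rw [mul_pow, mul_pow, pow_right_comm (Real.sqrt Ω.1), Real.sq_sqrt h0,
      pow_right_comm (Real.sqrt (1 - Ω.1)), Real.sq_sqrt (by linarith)]
    field_simp
  rw [Finset.sum_congr rfl hterm]
  have hb := add_pow Ω.1 (1 - Ω.1) (n * s)
  have h2 : (Ω.1 + (1 - Ω.1)) = 1 := by ring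
  rw [h2, one_pow] at hb
  exact hb.symm

lemma Wgt_pow_le_one {n : ℕ} {Q : Polynomial ℂ} (hQ : Q.natDegree ≤ n) (hW : Wgt n Q = 1) :
    ∀ s, 1 ≤ s → Wgt (n * s) (Q ^ s) ≤ 1 := by
  intro s hs
  induction s with
  | zero => omega
  | succ s ih =>
    rcases Nat.eq_or_lt_of_le hs with h1 | h1
    · rw [← h1]; simp [mul_one, pow_one, hW]
    · have hs' : 1 ≤ s := by omega
      have h2 : Wgt (n * s + n) (Q ^ s * Q) ≤ Wgt (n * s) (Q ^ s) * Wgt n Q :=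
        Wgt_mul_le (le_trans (Polynomial.natDegree_pow_le_of_le s hQ) (le_of_eq (Nat.mul_comm _ _))) hQ
      have h3 : n * (s + 1) = n * s + n := by ring
      have h4 : Q ^ (s + 1) = Q ^ s * Q := pow_succ Q s
      rw [h3, h4]
      calc Wgt (n * s + n) (Q ^ s * Q) ≤ Wgt (n * s) (Q ^ s) * Wgt n Q := h2
        _ = Wgt (n * s) (Q ^ s) := by rw [hW, mul_one]
        _ ≤ 1 := ih hs'

lemma Wgt_two_eq_of_eq {n : ℕ} {Q : Polynomial ℂ} (hQ : Q.natDegree ≤ n) (hW : Wgt n Q = 1)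
    {s : ℕ} (hs : 2 ≤ s) (he : Wgt (n * s) (Q ^ s) = 1) : Wgt (n + n) (Q * Q) = 1 := by
  have key : ∀ t, 2 ≤ t → Wgt (n * t) (Q ^ t) ≤ Wgt (n + n) (Q * Q) := by
    intro t ht
    induction t with
    | zero => omega
    | succ t ih =>
      rcases Nat.eq_or_lt_of_le ht with h1 | h1
      · rw [← h1]
        have : n * 2 = n + n := by ring
        rw [this, pow_two]
      · have ht' : 2 ≤ t := by omega
        have h2 : Wgt (n * t + n) (Q ^ t * Q) ≤ Wgt (n * t) (Q ^ t) * Wgt n Q :=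
          Wgt_mul_le (le_trans (Polynomial.natDegree_pow_le_of_le t hQ) (le_of_eq (Nat.mul_comm _ _))) hQ
        have h3 : n * (t + 1) = n * t + n := by ring
        rw [h3, pow_succ]
        calc Wgt (n * t + n) (Q ^ t * Q) ≤ Wgt (n * t) (Q ^ t) * Wgt n Q := h2
          _ = Wgt (n * t) (Q ^ t) := by rw [hW, mul_one]
          _ ≤ Wgt (n + n) (Q * Q) := ih ht'
  have h5 : Wgt (n + n) (Q * Q) ≤ 1 := by
    have := Wgt_mul_le hQ hQ
    rw [hW, mul_one] at this
    exact this
  have h6 := key s hs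
  rw [he] at h6
  linarith

lemma coherent_of_Wgt_two_eq {n : ℕ} {ψ : EuclideanSpace ℂ (Fin (n + 1))} (hψ : ‖ψ‖ = 1)
    (he : Wgt (n + n) (Qpoly n ψ * Qpoly n ψ) = 1) : IsCoherent n ψ := by
  classical
  set Q := Qpoly n ψ with hQdef
  have hQdeg : Q.natDegree ≤ n := Qpoly_natDegree_le n ψ
  have hW : Wgt n Q = 1 := by rw [hQdef, Wgt_Qpoly, hψ, one_pow]
  have hQne : Q ≠ 0 := by
    intro h
    rw [h] at hW
    rw [Wgt] at hW
    simp only [Polynomial.coeff_zero, norm_zero, zero_pow, OfNat.ofNat_ne_zero, ne_eq,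
      not_false_eq_true, zero_div, Finset.sum_const_zero] at hW
    exact zero_ne_one hW
  have hlam := lam_of_eq hQdeg (by rw [he, hW, mul_one])
  have hsqrtC : ∀ k : Fin (n + 1), ((Real.sqrt (n.choose (k : ℕ)) : ℝ) : ℂ) ≠ 0 := by
    intro k
    rw [Ne, Complex.ofReal_eq_zero]
    have : (0:ℝ) < (n.choose (k : ℕ) : ℝ) :=
      by exact_mod_cast Nat.choose_pos (Nat.lt_succ_iff.1 k.2)
    exact (Real.sqrt_pos.2 this).ne'
  have hψk : ∀ k : Fin (n + 1),
      ((Real.sqrt (n.choose (k : ℕ)) : ℝ) : ℂ) * ψ k = Q.coeff (k : ℕ) := by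
    intro k
    rw [hQdef, Qpoly_coeff ψ (Nat.lt_succ_iff.1 k.2)]
  rcases support_structure hQdeg hQne hlam with htop | hbot | ⟨u0, r, hu0, hr, hgeo⟩
  · -- support at top: ψ = c • bloch n (1, 0)
    have hsp : IsSpherePt ((1 : ℝ), (0 : ℝ)) :=
      ⟨⟨zero_le_one, le_refl 1⟩, ⟨le_refl 0, by positivity⟩⟩
    apply coherent_of_smul hsp (Q.coeff n) _ hψ
    refine PiLp.ext fun k => ?_
    have hkn : (k : ℕ) ≤ n := Nat.lt_succ_iff.1 k.2
    have hbl : bloch n ((1 : ℝ), (0 : ℝ)) k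
        = ((Real.sqrt (n.choose (k : ℕ)) * Real.sqrt 1 ^ (k : ℕ)
            * Real.sqrt (1 - 1) ^ (n - (k : ℕ)) : ℝ) : ℂ)
          * Complex.exp (-((k : ℕ) : ℂ) * Complex.I * ((0 : ℝ) : ℂ)) := rfl
    show ψ k = Q.coeff n * bloch n ((1 : ℝ), (0 : ℝ)) k
    rw [hbl]
    simp only [Complex.ofReal_zero, mul_zero, Complex.exp_zero, sub_self, Real.sqrt_zero,
      Real.sqrt_one, one_pow, mul_one]
    by_cases hk : (k : ℕ) = n
    · rw [hk]
      simp only [Nat.sub_self, pow_zero, mul_one, Nat.choose_self, Nat.cast_one, Real.sqrt_one,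
        Complex.ofReal_one, one_mul]
      have := hψk k
      rw [hk] at this
      simp only [Nat.choose_self, Nat.cast_one, Real.sqrt_one, Complex.ofReal_one, one_mul] at this
      rw [this]
    · have hlt : (k : ℕ) < n := lt_of_le_of_ne hkn hk
      have h1 : ψ k = 0 := by
        have h2 := hψk k
        rw [htop (k : ℕ) hlt] at h2
        exact (mul_eq_zero.1 h2).resolve_left (hsqrtC k)
      rw [h1, zero_pow (by omega : n - (k : ℕ) ≠ 0)]
      simp
  · -- support at bottom: ψ = c • bloch n (0, 0)
    have hsp : IsSpherePt ((0 : ℝ), (0 : ℝ)) :=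
      ⟨⟨le_refl 0, zero_le_one⟩, ⟨le_refl 0, by positivity⟩⟩
    apply coherent_of_smul hsp (Q.coeff 0) _ hψ
    refine PiLp.ext fun k => ?_
    show ψ k = Q.coeff 0 * bloch n ((0 : ℝ), (0 : ℝ)) k
    have hbl : bloch n ((0 : ℝ), (0 : ℝ)) k
        = ((Real.sqrt (n.choose (k : ℕ)) * Real.sqrt 0 ^ (k : ℕ)
            * Real.sqrt (1 - 0) ^ (n - (k : ℕ)) : ℝ) : ℂ)
          * Complex.exp (-((k : ℕ) : ℂ) * Complex.I * ((0 : ℝ) : ℂ)) := rfl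
    rw [hbl]
    simp only [Complex.ofReal_zero, mul_zero, Complex.exp_zero, sub_zero, Real.sqrt_zero,
      Real.sqrt_one, one_pow, mul_one]
    by_cases hk : (k : ℕ) = 0
    · have hk0 : k = (⟨0, by omega⟩ : Fin (n + 1)) := Fin.ext hk
      rw [hk0]
      simp only [pow_zero, mul_one, Nat.choose_zero_right, Nat.cast_one, Real.sqrt_one,
        Complex.ofReal_one, one_mul]
      have := hψk (⟨0, by omega⟩ : Fin (n + 1))
      simp only [Nat.choose_zero_right, Nat.cast_one, Real.sqrt_one, Complex.ofReal_one,
        one_mul] at this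
      rw [this]
    · have h1 : ψ k = 0 := by
        have h2 := hψk k
        rw [hbot (k : ℕ) (Nat.pos_of_ne_zero hk)] at h2
        exact (mul_eq_zero.1 h2).resolve_left (hsqrtC k)
      rw [h1, zero_pow hk]
      simp
  · -- geometric case
    set ρ := ‖r‖ with hρdef
    have hρ : 0 < ρ := norm_pos_iff.mpr hr
    set p₀ := ρ ^ 2 / (1 + ρ ^ 2) with hp₀
    have hSpos : (0:ℝ) < 1 + ρ ^ 2 := by positivity
    have hp₀0 : 0 ≤ p₀ := by positivity
    have hp₀1 : p₀ ≤ 1 := by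
      rw [hp₀, div_le_one hSpos]; linarith
    set ζ := (starRingEnd ℂ) r with hζ
    set φ₀ := if 0 ≤ ζ.arg then ζ.arg else ζ.arg + 2 * Real.pi with hφ₀
    have hφsp : 0 ≤ φ₀ ∧ φ₀ < 2 * Real.pi := by
      have ha1 := Complex.arg_le_pi ζ
      have ha2 := Complex.neg_pi_lt_arg ζ
      have hpi := Real.pi_pos
      rw [hφ₀]
      split_ifs with h
      · constructor; exact h; linarith
      · push_neg at h
        constructor <;> linarith
    have hsp : IsSpherePt (p₀, φ₀) := ⟨⟨hp₀0, hp₀1⟩, hφsp.1, hφsp.2⟩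
    set σ := Real.sqrt (1 + ρ ^ 2) with hσ
    have hσpos : 0 < σ := Real.sqrt_pos.2 hSpos
    have hσC : ((σ : ℝ) : ℂ) ≠ 0 := by rw [Ne, Complex.ofReal_eq_zero]; exact hσpos.ne'
    have hρC : ((ρ : ℝ) : ℂ) ≠ 0 := by rw [Ne, Complex.ofReal_eq_zero]; exact hρ.ne'
    have hb1 : Real.sqrt p₀ = ρ / σ := by
      rw [hp₀, Real.sqrt_div (sq_nonneg ρ), Real.sqrt_sq hρ.le, hσ]
    have hb2 : Real.sqrt (1 - p₀) = 1 / σ := by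
      have h1 : 1 - p₀ = 1 / (1 + ρ ^ 2) := by
        rw [hp₀]; field_simp; ring
      rw [h1, Real.sqrt_div zero_le_one, Real.sqrt_one, hσ]
    have hζρ : r * ζ = ((ρ : ℝ) : ℂ) ^ 2 := by
      rw [hζ, Complex.mul_conj, Complex.normSq_eq_norm_sq, hρdef]
      push_cast
      ring
    have hexpφ : Complex.exp ((φ₀ : ℂ) * Complex.I) = ζ / ((ρ : ℝ) : ℂ) := by
      have habs : ‖ζ‖ = ρ := by rw [hζ, Complex.norm_conj, hρdef]
      have h2 := Complex.norm_mul_exp_arg_mul_I ζ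
      rw [habs] at h2
      have h3 : Complex.exp ((ζ.arg : ℂ) * Complex.I) = ζ / ((ρ : ℝ) : ℂ) := by
        rw [eq_div_iff hρC, mul_comm]
        exact h2
      rw [hφ₀]
      split_ifs with h
      · exact h3
      · rw [Complex.ofReal_add, add_mul, Complex.exp_add, h3]
        have : Complex.exp (((2 * Real.pi : ℝ) : ℂ) * Complex.I) = 1 := by
          push_cast
          exact Complex.exp_two_pi_mul_I
        rw [this, mul_one]
    have hexpk : ∀ k : ℕ, Complex.exp (-((k : ℕ) : ℂ) * Complex.I * (φ₀ : ℂ))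
        = (r / ((ρ : ℝ) : ℂ)) ^ k := by
      intro k
      have h1 : -((k : ℕ) : ℂ) * Complex.I * (φ₀ : ℂ) = k * (-((φ₀ : ℂ) * Complex.I)) := by ring
      rw [h1, Complex.exp_nat_mul, Complex.exp_neg, hexpφ, inv_div]
      congr 1
      have hζne : ζ ≠ 0 := by
        rw [hζ]
        simpa using hr
      rw [div_eq_div_iff hζne hρC]
      linear_combination -hζρ
    refine coherent_of_smul hsp (u0 * ((σ : ℝ) : ℂ) ^ n) ?_ hψ
    refine PiLp.ext fun k => ?_
    show ψ k = (u0 * ((σ : ℝ) : ℂ) ^ n) * bloch n (p₀, φ₀) k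
    have hkn : (k : ℕ) ≤ n := Nat.lt_succ_iff.1 k.2
    have hCC : ((Real.sqrt (n.choose (k : ℕ)) : ℝ) : ℂ)
        * ((Real.sqrt (n.choose (k : ℕ)) : ℝ) : ℂ) = ((n.choose (k : ℕ) : ℕ) : ℂ) := by
      rw [← Complex.ofReal_mul, Real.mul_self_sqrt (by positivity)]
      norm_num
    have hψkk : ψ k = ((Real.sqrt (n.choose (k : ℕ)) : ℝ) : ℂ) * (u0 * r ^ (k : ℕ)) := by
      apply mul_left_cancel₀ (hsqrtC k)
      rw [hψk k, hgeo _ hkn]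
      linear_combination (-(u0 * r ^ (k : ℕ))) * hCC
    have hbl : bloch n (p₀, φ₀) k
        = ((Real.sqrt (n.choose (k : ℕ)) * Real.sqrt p₀ ^ (k : ℕ)
            * Real.sqrt (1 - p₀) ^ (n - (k : ℕ)) : ℝ) : ℂ)
          * Complex.exp (-((k : ℕ) : ℂ) * Complex.I * (φ₀ : ℂ)) := rfl
    rw [hbl, hexpk, hψkk, hb1, hb2]
    have hσsplit : ((σ : ℝ) : ℂ) ^ n
        = ((σ : ℝ) : ℂ) ^ (k : ℕ) * ((σ : ℝ) : ℂ) ^ (n - (k : ℕ)) := by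
      rw [← pow_add]
      congr 1
      omega
    rw [hσsplit]
    push_cast
    field_simp
    have e1 : ((σ : ℝ) : ℂ) ^ (k : ℕ) * ((σ : ℝ) : ℂ)⁻¹ ^ (k : ℕ) = 1 := by
      rw [← mul_pow, mul_inv_cancel₀ hσC, one_pow]
    have e2 : ((σ : ℝ) : ℂ) ^ (n - (k : ℕ)) * ((σ : ℝ) : ℂ)⁻¹ ^ (n - (k : ℕ)) = 1 := by
      rw [← mul_pow, mul_inv_cancel₀ hσC, one_pow]
    have e3 : ((ρ : ℝ) : ℂ) ^ (k : ℕ) * ((ρ : ℝ) : ℂ)⁻¹ ^ (k : ℕ) = 1 := by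
      rw [← mul_pow, mul_inv_cancel₀ hρC, one_pow]
    linear_combination (-(((Real.sqrt (n.choose (k : ℕ)) : ℝ) : ℂ) * r ^ (k : ℕ)
        * (((σ : ℝ) : ℂ) ^ (n - (k : ℕ)) * ((σ : ℝ) : ℂ)⁻¹ ^ (n - (k : ℕ)))
        * (((ρ : ℝ) : ℂ) ^ (k : ℕ) * ((ρ : ℝ) : ℂ)⁻¹ ^ (k : ℕ)))) * e1
      - (((Real.sqrt (n.choose (k : ℕ)) : ℝ) : ℂ) * r ^ (k : ℕ)
        * (((ρ : ℝ) : ℂ) ^ (k : ℕ) * ((ρ : ℝ) : ℂ)⁻¹ ^ (k : ℕ))) * e2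
      - (((Real.sqrt (n.choose (k : ℕ)) : ℝ) : ℂ) * r ^ (k : ℕ)) * e3

noncomputable def Gf (N : ℕ) (R : Polynomial ℂ) (Ω : ℝ × ℝ) : ℂ :=
  ∑ m ∈ Finset.range (N + 1), R.coeff m *
    (((Real.sqrt Ω.1 : ℝ) : ℂ) * Complex.exp ((Ω.2 : ℂ) * Complex.I)) ^ m *
    ((Real.sqrt (1 - Ω.1) : ℝ) : ℂ) ^ (N - m)

lemma ov_eq_Gf (n : ℕ) (ψ : EuclideanSpace ℂ (Fin (n + 1))) (Ω : ℝ × ℝ) :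
    ov n Ω ψ = Gf n (Qpoly n ψ) Ω := by
  rw [ov, Gf]
  rw [PiLp.inner_apply]
  rw [← Fin.sum_univ_eq_sum_range (fun m => (Qpoly n ψ).coeff m *
    (((Real.sqrt Ω.1 : ℝ) : ℂ) * Complex.exp ((Ω.2 : ℂ) * Complex.I)) ^ m *
    ((Real.sqrt (1 - Ω.1) : ℝ) : ℂ) ^ (n - m))]
  apply Finset.sum_congr rfl
  intro k _
  have hkn : (k : ℕ) ≤ n := Nat.lt_succ_iff.1 k.2
  rw [RCLike.inner_apply', Qpoly_coeff ψ hkn]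
  have hconj : (starRingEnd ℂ) (bloch n Ω k)
      = ((Real.sqrt (n.choose (k : ℕ)) * Real.sqrt Ω.1 ^ (k : ℕ)
          * Real.sqrt (1 - Ω.1) ^ (n - (k : ℕ)) : ℝ) : ℂ)
        * Complex.exp (((k : ℕ) : ℂ) * Complex.I * (Ω.2 : ℂ)) := by
    have hbl : bloch n Ω k
        = ((Real.sqrt (n.choose (k : ℕ)) * Real.sqrt Ω.1 ^ (k : ℕ)
            * Real.sqrt (1 - Ω.1) ^ (n - (k : ℕ)) : ℝ) : ℂ)
          * Complex.exp (-((k : ℕ) : ℂ) * Complex.I * (Ω.2 : ℂ)) := rfl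
    rw [hbl, map_mul, Complex.conj_ofReal, ← Complex.exp_conj]
    congr 2
    simp [map_mul, Complex.conj_I, Complex.conj_ofReal]
  rw [hconj]
  have hexp : Complex.exp (((k : ℕ) : ℂ) * Complex.I * (Ω.2 : ℂ))
      = Complex.exp ((Ω.2 : ℂ) * Complex.I) ^ (k : ℕ) := by
    rw [← Complex.exp_nat_mul]
    congr 1
    ring
  rw [hexp, mul_pow]
  push_cast
  have : ψ ⟨(k : ℕ), Nat.lt_succ_iff.2 hkn⟩ = ψ k := by congr
  rw [this]
  ring

lemma Gf_eval {N : ℕ} {R : Polynomial ℂ} (hR : R.natDegree ≤ N) (Ω : ℝ × ℝ)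
    (hw : ((Real.sqrt (1 - Ω.1) : ℝ) : ℂ) ≠ 0) :
    Gf N R Ω = ((Real.sqrt (1 - Ω.1) : ℝ) : ℂ) ^ N *
      R.eval ((((Real.sqrt Ω.1 : ℝ) : ℂ) * Complex.exp ((Ω.2 : ℂ) * Complex.I))
        / ((Real.sqrt (1 - Ω.1) : ℝ) : ℂ)) := by
  set z := (((Real.sqrt Ω.1 : ℝ) : ℂ) * Complex.exp ((Ω.2 : ℂ) * Complex.I)) with hz
  set w := ((Real.sqrt (1 - Ω.1) : ℝ) : ℂ) with hwdef
  rw [Gf, Polynomial.eval_eq_sum_range' (Nat.lt_succ_iff.2 hR), Finset.mul_sum]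
  apply Finset.sum_congr rfl
  intro m hm
  have hmN : m ≤ N := Nat.lt_succ_iff.1 (Finset.mem_range.1 hm)
  have hsplit : w ^ N = w ^ m * w ^ (N - m) := by
    rw [← pow_add]; congr 1; omega
  rw [div_pow, hsplit]
  field_simp
  ring

lemma Gf_mul {N M : ℕ} {R S : Polynomial ℂ} (hR : R.natDegree ≤ N) (hS : S.natDegree ≤ M)
    (Ω : ℝ × ℝ) (hp : Ω.1 < 1) :
    Gf N R Ω * Gf M S Ω = Gf (N + M) (R * S) Ω := by
  have hw : ((Real.sqrt (1 - Ω.1) : ℝ) : ℂ) ≠ 0 := by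
    rw [Ne, Complex.ofReal_eq_zero]
    exact (Real.sqrt_pos.2 (by linarith)).ne'
  rw [Gf_eval hR Ω hw, Gf_eval hS Ω hw,
    Gf_eval (le_trans Polynomial.natDegree_mul_le (add_le_add hR hS)) Ω hw,
    Polynomial.eval_mul]
  ring

lemma Gf_pow {n : ℕ} {R : Polynomial ℂ} (hR : R.natDegree ≤ n) (Ω : ℝ × ℝ)
    (hp : Ω.1 < 1) (s : ℕ) : (Gf n R Ω) ^ s = Gf (n * s) (R ^ s) Ω := by
  induction s with
  | zero =>
    rw [pow_zero, pow_zero, Gf]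
    simp
  | succ s ih =>
    have hns : n * (s + 1) = n * s + n := by ring
    rw [pow_succ, ih, Gf_mul (le_trans (Polynomial.natDegree_pow_le_of_le s hR)
      (le_of_eq (Nat.mul_comm _ _))) hR Ω hp, ← pow_succ, hns]

section IntPhi
open Finset intervalIntegral

lemma exp_phi_continuous : Continuous fun φ : ℝ => Complex.exp ((φ : ℂ) * Complex.I) :=
  Complex.continuous_exp.comp (Complex.continuous_ofReal.mul continuous_const)

lemma exp_lin_continuous (c : ℂ) : Continuous fun φ : ℝ => Complex.exp (c * (φ : ℂ)) :=
  Complex.continuous_exp.comp (continuous_const.mul Complex.continuous_ofReal)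

lemma int_exp_diag {m m' : ℕ} (hne : m ≠ m') :
    ∫ φ : ℝ in (0:ℝ)..(2 * Real.pi),
      Complex.exp ((((m : ℕ) : ℂ) - ((m' : ℕ) : ℂ)) * ((φ : ℂ) * Complex.I)) = 0 := by
  set c : ℂ := (((m : ℕ) : ℂ) - ((m' : ℕ) : ℂ)) * Complex.I with hc
  have hc0 : c ≠ 0 := by
    apply mul_ne_zero _ Complex.I_ne_zero
    rw [sub_ne_zero]
    exact_mod_cast hne
  have hcongr : ∀ φ : ℝ, Complex.exp ((((m : ℕ) : ℂ) - ((m' : ℕ) : ℂ)) * ((φ : ℂ) * Complex.I))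
      = Complex.exp (c * (φ : ℂ)) := by
    intro φ; congr 1; rw [hc]; ring
  rw [intervalIntegral.integral_congr (fun φ _ => hcongr φ)]
  rw [integral_exp_mul_complex hc0]
  have h2 : c * ((2 * Real.pi : ℝ) : ℂ) = ((m : ℤ) - (m' : ℤ) : ℤ) *
      (2 * (Real.pi : ℂ) * Complex.I) := by
    rw [hc]; push_cast; ring
  rw [h2, Complex.exp_int_mul_two_pi_mul_I]
  simp

lemma int_phi {N : ℕ} (R : Polynomial ℂ) {p : ℝ} (hp0 : 0 ≤ p) (hp1 : p ≤ 1) :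
    ∫ φ in (0:ℝ)..(2 * Real.pi), ‖Gf N R (p, φ)‖ ^ 2
      = 2 * Real.pi * ∑ m ∈ Finset.range (N + 1),
          ‖R.coeff m‖ ^ 2 * p ^ m * (1 - p) ^ (N - m) := by
  classical
  set E : ℝ → ℂ := fun φ => Complex.exp ((φ : ℂ) * Complex.I) with hE
  set a : ℕ → ℂ := fun m => R.coeff m * ((Real.sqrt p : ℝ) : ℂ) ^ m
    * ((Real.sqrt (1 - p) : ℝ) : ℂ) ^ (N - m) with ha
  have hG : ∀ φ : ℝ, Gf N R (p, φ) = ∑ m ∈ Finset.range (N + 1), a m * E φ ^ m := by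
    intro φ
    rw [Gf]
    apply Finset.sum_congr rfl
    intro m _
    rw [ha, hE, mul_pow]
    ring
  have hEcont : Continuous E := exp_phi_continuous
  have hGcont : Continuous fun φ : ℝ => Gf N R (p, φ) := by
    have h1 : (fun φ : ℝ => Gf N R (p, φ))
        = fun φ => ∑ m ∈ Finset.range (N + 1), a m * E φ ^ m := funext hG
    rw [h1]
    exact continuous_finset_sum _ fun m _ => continuous_const.mul (hEcont.pow m)
  have hconjG : ∀ φ : ℝ, (starRingEnd ℂ) (Gf N R (p, φ))
      = ∑ m ∈ Finset.range (N + 1), (starRingEnd ℂ) (a m)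
          * Complex.exp (-((φ : ℂ) * Complex.I)) ^ m := by
    intro φ
    rw [hG, map_sum]
    apply Finset.sum_congr rfl
    intro m _
    rw [map_mul, map_pow]
    congr 2
    rw [hE, ← Complex.exp_conj]
    congr 1
    simp [map_mul, Complex.conj_I, Complex.conj_ofReal]
  have hprod : ∀ φ : ℝ, Gf N R (p, φ) * (starRingEnd ℂ) (Gf N R (p, φ))
      = ∑ x ∈ Finset.range (N + 1) ×ˢ Finset.range (N + 1),
          (a x.1 * (starRingEnd ℂ) (a x.2))
            * Complex.exp ((((x.1 : ℕ) : ℂ) - ((x.2 : ℕ) : ℂ)) * ((φ : ℂ) * Complex.I)) := by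
    intro φ
    rw [hconjG φ, hG φ, Finset.sum_mul_sum, ← Finset.sum_product']
    apply Finset.sum_congr rfl
    intro x _
    have hee : E φ ^ x.1 * Complex.exp (-((φ : ℂ) * Complex.I)) ^ x.2
        = Complex.exp ((((x.1 : ℕ) : ℂ) - ((x.2 : ℕ) : ℂ)) * ((φ : ℂ) * Complex.I)) := by
      rw [hE, ← Complex.exp_nat_mul, ← Complex.exp_nat_mul, ← Complex.exp_add]
      congr 1
      ring
    rw [← hee]
    ring
  have hprodcont : Continuous fun φ : ℝ =>
      Gf N R (p, φ) * (starRingEnd ℂ) (Gf N R (p, φ)) :=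
    hGcont.mul (Complex.continuous_conj.comp hGcont)
  have step1 : ∫ φ in (0:ℝ)..(2 * Real.pi), ‖Gf N R (p, φ)‖ ^ 2
      = Complex.reCLM (∫ φ in (0:ℝ)..(2 * Real.pi),
          Gf N R (p, φ) * (starRingEnd ℂ) (Gf N R (p, φ))) := by
    rw [← ContinuousLinearMap.intervalIntegral_comp_comm _
      (hprodcont.intervalIntegrable _ _)]
    apply intervalIntegral.integral_congr
    intro φ _
    show ‖Gf N R (p, φ)‖ ^ 2 = Complex.reCLM (Gf N R (p, φ) * (starRingEnd ℂ) (Gf N R (p, φ)))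
    rw [Complex.mul_conj]
    simp only [Complex.reCLM_apply, Complex.ofReal_re]
    rw [← Complex.sq_norm]
  have step2 : (∫ φ in (0:ℝ)..(2 * Real.pi),
      Gf N R (p, φ) * (starRingEnd ℂ) (Gf N R (p, φ)))
      = ∑ x ∈ Finset.range (N + 1) ×ˢ Finset.range (N + 1),
          ∫ φ in (0:ℝ)..(2 * Real.pi), (a x.1 * (starRingEnd ℂ) (a x.2))
            * Complex.exp ((((x.1 : ℕ) : ℂ) - ((x.2 : ℕ) : ℂ)) * ((φ : ℂ) * Complex.I)) := by
    rw [intervalIntegral.integral_congr (fun φ _ => hprod φ)]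
    apply intervalIntegral.integral_finset_sum
    intro x _
    apply Continuous.intervalIntegrable
    apply continuous_const.mul
    have h4 : (fun φ : ℝ => Complex.exp ((((x.1 : ℕ) : ℂ) - ((x.2 : ℕ) : ℂ))
        * ((φ : ℂ) * Complex.I)))
        = fun φ : ℝ => Complex.exp (((((x.1 : ℕ) : ℂ) - ((x.2 : ℕ) : ℂ)) * Complex.I)
          * (φ : ℂ)) := by
      funext φ; congr 1; ring
    rw [h4]
    exact exp_lin_continuous _
  have step3 : ∀ x ∈ Finset.range (N + 1) ×ˢ Finset.range (N + 1),
      (∫ φ in (0:ℝ)..(2 * Real.pi), (a x.1 * (starRingEnd ℂ) (a x.2))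
        * Complex.exp ((((x.1 : ℕ) : ℂ) - ((x.2 : ℕ) : ℂ)) * ((φ : ℂ) * Complex.I)))
      = if x.1 = x.2 then ((2 * Real.pi : ℝ) : ℂ) * (a x.1 * (starRingEnd ℂ) (a x.2))
        else 0 := by
    intro x _
    by_cases hx : x.1 = x.2
    · rw [if_pos hx, hx]
      have h5 : ∀ φ : ℝ, (a x.2 * (starRingEnd ℂ) (a x.2))
          * Complex.exp ((((x.2 : ℕ) : ℂ) - ((x.2 : ℕ) : ℂ)) * ((φ : ℂ) * Complex.I))
          = a x.2 * (starRingEnd ℂ) (a x.2) := by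
        intro φ
        rw [sub_self, zero_mul, Complex.exp_zero, mul_one]
      rw [intervalIntegral.integral_congr (fun φ _ => h5 φ)]
      rw [intervalIntegral.integral_const]
      rw [sub_zero, Complex.real_smul]
    · rw [if_neg hx]
      rw [intervalIntegral.integral_const_mul, int_exp_diag hx, mul_zero]
  rw [step1, step2, Finset.sum_congr rfl step3]
  rw [Finset.sum_product]
  have step4 : ∀ m ∈ Finset.range (N + 1),
      (∑ m' ∈ Finset.range (N + 1), if m = m' then
        ((2 * Real.pi : ℝ) : ℂ) * (a m * (starRingEnd ℂ) (a m')) else 0)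
      = ((2 * Real.pi * ‖a m‖ ^ 2 : ℝ) : ℂ) := by
    intro m hm
    rw [Finset.sum_ite_eq]
    rw [if_pos hm]
    rw [Complex.mul_conj]
    rw [← Complex.sq_norm]
    push_cast
    rfl
  rw [Finset.sum_congr rfl step4, ← Complex.ofReal_sum]
  simp only [Complex.reCLM_apply, Complex.ofReal_re]
  rw [Finset.mul_sum]
  apply Finset.sum_congr rfl
  intro m _
  rw [ha]
  rw [norm_mul, norm_mul, norm_pow, norm_pow, Complex.norm_real, Complex.norm_real,
    Real.norm_eq_abs, Real.norm_eq_abs, abs_of_nonneg (Real.sqrt_nonneg _),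
    abs_of_nonneg (Real.sqrt_nonneg _)]
  rw [mul_pow, mul_pow, pow_right_comm (Real.sqrt p), Real.sq_sqrt hp0,
    pow_right_comm (Real.sqrt (1 - p)), Real.sq_sqrt (by linarith)]

end IntPhi

section Beta
open Finset intervalIntegral

lemma prod_shift_factorial (m : ℕ) : ∀ k : ℕ,
    m.factorial * ∏ j ∈ Finset.range (k + 1), (m + 1 + j) = (m + k + 1).factorial := by
  intro k
  induction k with
  | zero => simp [Nat.factorial_succ, mul_comm]
  | succ k ih =>
    rw [Finset.prod_range_succ, ← mul_assoc, ih]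
    have h2 : m + (k + 1) + 1 = (m + k + 1) + 1 := by omega
    rw [h2]
    conv_rhs => rw [Nat.factorial_succ]
    ring

lemma int_beta {m N : ℕ} (h : m ≤ N) :
    ∫ p in (0:ℝ)..1, p ^ m * (1 - p) ^ (N - m) = 1 / (((N : ℝ) + 1) * (N.choose m : ℝ)) := by
  have hu : 0 < Complex.re ((m : ℂ) + 1) := by
    simp only [Complex.add_re, Complex.natCast_re, Complex.one_re]
    positivity
  have hval := Complex.betaIntegral_eval_nat_add_one_right hu (N - m)
  have h1 : Complex.betaIntegral ((m : ℂ) + 1) (((N - m : ℕ) : ℂ) + 1)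
      = ((∫ p in (0:ℝ)..1, p ^ m * (1 - p) ^ (N - m) : ℝ) : ℂ) := by
    rw [Complex.betaIntegral, ← intervalIntegral.integral_ofReal]
    apply intervalIntegral.integral_congr
    intro x _
    show (x : ℂ) ^ ((m : ℂ) + 1 - 1) * (1 - (x : ℂ)) ^ (((N - m : ℕ) : ℂ) + 1 - 1)
        = ((x ^ m * (1 - x) ^ (N - m) : ℝ) : ℂ)
    rw [add_sub_cancel_right, add_sub_cancel_right, Complex.cpow_natCast, Complex.cpow_natCast]
    push_cast
    ring
  rw [h1] at hval
  set P : ℕ := ∏ j ∈ Finset.range (N - m + 1), (m + 1 + j) with hP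
  have hprod : (∏ j ∈ Finset.range (N - m + 1), ((m : ℂ) + 1 + (j : ℕ))) = (P : ℂ) := by
    rw [hP, Nat.cast_prod]
    apply Finset.prod_congr rfl
    intro j _
    push_cast
    ring
  have hfac := prod_shift_factorial m (N - m)
  have hNm : m + (N - m) + 1 = N + 1 := by omega
  rw [hNm, ← hP] at hfac
  have hPpos : 0 < P := by
    rw [hP]
    apply Finset.prod_pos
    intro j _
    omega
  rw [hprod] at hval
  have hreal : (∫ p in (0:ℝ)..1, p ^ m * (1 - p) ^ (N - m) : ℝ)
      = ((N - m).factorial : ℝ) / (P : ℝ) := by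
    apply Complex.ofReal_inj.1
    rw [hval, Complex.ofReal_div]
    push_cast
    ring_nf
  rw [hreal]
  have hnat : (N - m).factorial * ((N + 1) * N.choose m) = P := by
    apply Nat.eq_of_mul_eq_mul_left (Nat.factorial_pos m)
    rw [hfac]
    have hCh := Nat.choose_mul_factorial_mul_factorial h
    calc m.factorial * ((N - m).factorial * ((N + 1) * N.choose m))
        = (N + 1) * (N.choose m * m.factorial * (N - m).factorial) := by ring
      _ = (N + 1) * N.factorial := by rw [hCh]
      _ = (N + 1).factorial := (Nat.factorial_succ N).symm
  have hPne : (P : ℝ) ≠ 0 := by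
    exact_mod_cast hPpos.ne'
  have hden : (((N : ℝ) + 1) * (N.choose m : ℝ)) ≠ 0 := by
    have : (0:ℝ) < (N.choose m : ℝ) := by exact_mod_cast Nat.choose_pos h
    positivity
  rw [div_eq_div_iff hPne hden]
  rw [one_mul]
  have : (P : ℝ) = (((N - m).factorial * ((N + 1) * N.choose m) : ℕ) : ℝ) := by
    exact_mod_cast congrArg (fun x : ℕ => (x : ℝ)) hnat.symm
  rw [this]
  push_cast
  ring

end Beta

section SphereIntLemmas
open Finset intervalIntegral

lemma sphereInt_Gf {N : ℕ} {R : Polynomial ℂ} (hR : R.natDegree ≤ N) :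
    sphereInt (fun Ω => ‖Gf N R Ω‖ ^ 2) = Wgt N R / ((N : ℝ) + 1) := by
  rw [sphereInt]
  have hpi := Real.pi_pos
  have hcongr : Set.EqOn
      (fun p => (∫ φ in (0:ℝ)..(2 * Real.pi), ‖Gf N R (p, φ)‖ ^ 2) / (2 * Real.pi))
      (fun p => ∑ m ∈ Finset.range (N + 1), ‖R.coeff m‖ ^ 2 * p ^ m * (1 - p) ^ (N - m))
      (Set.uIcc (0:ℝ) 1) := by
    intro p hp
    rw [Set.uIcc_of_le zero_le_one] at hp
    show (∫ φ in (0:ℝ)..(2 * Real.pi), ‖Gf N R (p, φ)‖ ^ 2) / (2 * Real.pi) = _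
    rw [int_phi R hp.1 hp.2]
    rw [mul_comm, mul_div_assoc, div_self (by positivity : (2 * Real.pi : ℝ) ≠ 0), mul_one]
  rw [intervalIntegral.integral_congr hcongr]
  have hic : ∀ m : ℕ, Continuous fun p : ℝ => ‖R.coeff m‖ ^ 2 * p ^ m * (1 - p) ^ (N - m) := by
    intro m
    exact (continuous_const.mul (continuous_pow m)).mul
      ((continuous_const.sub continuous_id).pow _)
  rw [intervalIntegral.integral_finset_sum (fun m _ => (hic m).intervalIntegrable 0 1)]
  have hterm : ∀ m ∈ Finset.range (N + 1),
      (∫ p in (0:ℝ)..1, ‖R.coeff m‖ ^ 2 * p ^ m * (1 - p) ^ (N - m))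
      = (‖R.coeff m‖ ^ 2 / (N.choose m : ℝ)) / ((N : ℝ) + 1) := by
    intro m hm
    have hmN := Nat.lt_succ_iff.1 (Finset.mem_range.1 hm)
    have h6 : (fun p : ℝ => ‖R.coeff m‖ ^ 2 * p ^ m * (1 - p) ^ (N - m))
        = fun p : ℝ => ‖R.coeff m‖ ^ 2 * (p ^ m * (1 - p) ^ (N - m)) := by
      funext p; ring
    rw [h6, intervalIntegral.integral_const_mul, int_beta hmN]
    rw [mul_one_div, div_div, mul_comm ((N:ℝ) + 1) _]
  rw [Finset.sum_congr rfl hterm, Wgt, Finset.sum_div]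

lemma sphereInt_ov_pow (n s : ℕ) (ψ : EuclideanSpace ℂ (Fin (n + 1))) :
    sphereInt (fun Ω => ‖ov n Ω ψ‖ ^ (2 * s))
      = Wgt (n * s) ((Qpoly n ψ) ^ s) / (((n * s : ℕ) : ℝ) + 1) := by
  have hdeg := Qpoly_natDegree_le n ψ
  have hdegs : ((Qpoly n ψ) ^ s).natDegree ≤ n * s :=
    le_trans (Polynomial.natDegree_pow_le_of_le s hdeg) (le_of_eq (Nat.mul_comm _ _))
  have hmain : sphereInt (fun Ω => ‖ov n Ω ψ‖ ^ (2 * s))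
      = sphereInt (fun Ω => ‖Gf (n * s) ((Qpoly n ψ) ^ s) Ω‖ ^ 2) := by
    rw [sphereInt, sphereInt]
    apply intervalIntegral.integral_congr_ae
    have hae : ∀ᵐ (p : ℝ), p ≠ 1 := by
      rw [MeasureTheory.ae_iff]
      have hset : {p : ℝ | ¬ p ≠ 1} = {1} := by ext x; simp
      rw [hset]
      exact Real.volume_singleton
    filter_upwards [hae] with p hp1 hpI
    rw [Set.uIoc_of_le zero_le_one] at hpI
    have hplt : p < 1 := lt_of_le_of_ne hpI.2 hp1
    congr 1
    apply intervalIntegral.integral_congr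
    intro φ _
    show ‖ov n (p, φ) ψ‖ ^ (2 * s) = ‖Gf (n * s) ((Qpoly n ψ) ^ s) (p, φ)‖ ^ 2
    rw [ov_eq_Gf, ← Gf_pow hdeg (p, φ) hplt s, norm_pow, ← pow_mul, Nat.mul_comm s 2]
  rw [hmain, sphereInt_Gf hdegs]

end SphereIntLemmas

end Part2Test

end LiebAux

/-- Generalized Lieb inequality for integer powers `s ≥ 1`, with
the equality characterization for `s ≥ 2`. -/
theorem lieb_inequality_integer_powers (n : ℕ) (s : ℕ) (hs : 1 ≤ s)
    (ψ : EuclideanSpace ℂ (Fin (n + 1))) (hψ : ‖ψ‖ = 1) :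
    ((n : ℝ) * (s : ℝ) + 1) * sphereInt (fun Ω => ‖ov n Ω ψ‖ ^ (2 * s)) ≤ 1 ∧
      (2 ≤ s →
        (((n : ℝ) * (s : ℝ) + 1) * sphereInt (fun Ω => ‖ov n Ω ψ‖ ^ (2 * s)) = 1 ↔
          IsCoherent n ψ)) := by
  have hdeg := Qpoly_natDegree_le n ψ
  have hW : Wgt n (Qpoly n ψ) = 1 := by rw [Wgt_Qpoly, hψ, one_pow]
  have hid : ((n : ℝ) * (s : ℝ) + 1) * sphereInt (fun Ω => ‖ov n Ω ψ‖ ^ (2 * s))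
      = Wgt (n * s) ((Qpoly n ψ) ^ s) := by
    rw [sphereInt_ov_pow n s ψ]
    have hne : (((n * s : ℕ) : ℝ) + 1) ≠ 0 := by positivity
    have hcast : ((n : ℝ) * (s : ℝ) + 1) = (((n * s : ℕ) : ℝ) + 1) := by push_cast; ring
    rw [hcast, mul_comm, div_mul_cancel₀ _ hne]
  constructor
  · rw [hid]
    exact Wgt_pow_le_one hdeg hW s hs
  · intro hs2
    constructor
    · intro heq
      rw [hid] at heq
      exact coherent_of_Wgt_two_eq hψ (Wgt_two_eq_of_eq hdeg hW hs2 heq)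
    · intro hcoh
      obtain ⟨θ, Ω, hΩ, hψeq⟩ := hcoh
      rw [hid, hψeq]
      exact Wgt_coherent_pow hΩ s
end

section
/- Lower bound on the Wehrl entropy for arbitrary spin: for every n ∈ ℕ and every unit vector ψ ∈ ℂ^(n+1), the Wehrl entropy satisfies S_W(ψ) ≥ ln( (2n+1)/(n+1) ) > 0 (for n ≥ 1). -/
open MeasureTheory

open intervalIntegral Finset Complex Polynomial

private lemma betaAux (a b : ℕ) :
    ((a:ℝ)+1) * ∫ x in (0:ℝ)..1, x^a * (1-x)^(b+1) =
      ((b:ℝ)+1) * ∫ x in (0:ℝ)..1, x^(a+1) * (1-x)^b := by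
  have key : ∫ x in (0:ℝ)..1,
      (((a:ℝ)+1) * (x^a * (1-x)^(b+1)) - ((b:ℝ)+1) * (x^(a+1) * (1-x)^b)) = 0 := by
    have h : ∀ x ∈ Set.uIcc (0:ℝ) 1, HasDerivAt (fun x : ℝ => x^(a+1) * (1-x)^(b+1))
        (((a:ℝ)+1) * (x^a * (1-x)^(b+1)) - ((b:ℝ)+1) * (x^(a+1) * (1-x)^b)) x := by
      intro x _
      have h1 : HasDerivAt (fun x:ℝ => x^(a+1)) (((a:ℝ)+1)*x^a) x := by
        simpa using hasDerivAt_pow (a+1) x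
      have h2 : HasDerivAt (fun x:ℝ => (1-x)^(b+1)) (-(((b:ℝ)+1)*(1-x)^b)) x := by
        have := (hasDerivAt_pow (b+1) (1-x)).comp x ((hasDerivAt_id x).const_sub 1)
        simpa [Function.comp_def] using this
      have := h1.mul h2
      exact this.congr_deriv (by ring)
    rw [integral_eq_sub_of_hasDerivAt h (by apply Continuous.intervalIntegrable; continuity)]
    simp
  have hi1 : IntervalIntegrable (fun x : ℝ => x^a * (1-x)^(b+1)) volume 0 1 := by
    apply Continuous.intervalIntegrable; continuity
  have hi2 : IntervalIntegrable (fun x : ℝ => x^(a+1) * (1-x)^b) volume 0 1 := by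
    apply Continuous.intervalIntegrable; continuity
  rw [integral_sub ((hi1.const_mul _)) ((hi2.const_mul _)), intervalIntegral.integral_const_mul,
    intervalIntegral.integral_const_mul] at key
  linarith

private lemma betaNat (a b : ℕ) :
    ∫ x in (0:ℝ)..1, x^a * (1-x)^b =
      (a.factorial : ℝ) * b.factorial / (a+b+1).factorial := by
  induction b generalizing a with
  | zero =>
      simp only [pow_zero, mul_one, integral_pow]
      rw [Nat.factorial_zero, Nat.add_zero, Nat.factorial_succ]
      push_cast
      rw [one_pow, zero_pow (by omega)]
      have : (a:ℝ) + 1 ≠ 0 := by positivity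
      field_simp
      norm_num
  | succ b ih =>
      have h := betaAux a b
      rw [ih (a+1)] at h
      have ha : ((a:ℝ)+1) ≠ 0 := by positivity
      have h2 : ∫ x in (0:ℝ)..1, x^a * (1-x)^(b+1)
          = ((b:ℝ)+1) * ((a+1).factorial * b.factorial / (a+1+b+1).factorial) / ((a:ℝ)+1) := by
        field_simp at h ⊢; linarith
      rw [h2, Nat.factorial_succ (a), Nat.factorial_succ b]
      have : a + 1 + b + 1 = a + (b+1) + 1 := by omega
      rw [this]
      push_cast
      field_simp

private lemma expCircle (m : ℤ) :
    ∫ φ in (0:ℝ)..(2*Real.pi), Complex.exp (m * Complex.I * φ) =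
      if m = 0 then (2*Real.pi : ℂ) else 0 := by
  rcases eq_or_ne m 0 with hm | hm
  · simp [hm]
  · have hc : (m : ℂ) * Complex.I ≠ 0 := by
      simp [Complex.I_ne_zero, hm]
    rw [if_neg hm, integral_exp_mul_complex hc]
    have h1 : (m:ℂ) * Complex.I * ((2:ℝ)*Real.pi : ℝ) = (m:ℤ) * (2 * Real.pi * Complex.I) := by
      push_cast; ring
    rw [h1, Complex.exp_int_mul_two_pi_mul_I]
    simp

private lemma parseval (Q : Polynomial ℂ) (M : ℕ) (h : Q.natDegree < M) :
    ∫ φ in (0:ℝ)..(2*Real.pi), ‖Q.eval (Complex.exp (Complex.I * φ))‖^2 =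
      2*Real.pi * ∑ k ∈ Finset.range M, ‖Q.coeff k‖^2 := by
  set g : ℝ → ℂ := fun φ => Q.eval (Complex.exp (Complex.I * φ)) with hg
  have key : ∫ φ in (0:ℝ)..(2*Real.pi), g φ * (starRingEnd ℂ) (g φ) =
      (2*Real.pi : ℂ) * ∑ k ∈ Finset.range M, (‖Q.coeff k‖^2 : ℝ) := by
    have hexp : ∀ φ : ℝ, g φ = ∑ j ∈ Finset.range M, Q.coeff j * Complex.exp (Complex.I * φ) ^ j :=
      fun φ => Polynomial.eval_eq_sum_range' h _
    have hexpand : ∀ φ : ℝ, g φ * (starRingEnd ℂ) (g φ) =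
        ∑ j ∈ Finset.range M, ∑ k ∈ Finset.range M,
          Q.coeff j * (starRingEnd ℂ) (Q.coeff k) * Complex.exp (((j - k : ℤ) : ℂ) * Complex.I * φ) := by
      intro φ
      rw [hexp, map_sum, Finset.sum_mul_sum]
      refine Finset.sum_congr rfl fun j _ => Finset.sum_congr rfl fun k _ => ?_
      have hconj : (starRingEnd ℂ) (Complex.exp (Complex.I * φ) ^ k)
          = Complex.exp (-(Complex.I * φ)) ^ k := by
        rw [map_pow, ← Complex.exp_conj, map_mul, Complex.conj_I, Complex.conj_ofReal]
        ring_nf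
      rw [map_mul, hconj, ← Complex.exp_nat_mul, ← Complex.exp_nat_mul]
      rw [mul_mul_mul_comm, ← Complex.exp_add]
      congr 2
      push_cast
      ring
    calc ∫ φ in (0:ℝ)..(2*Real.pi), g φ * (starRingEnd ℂ) (g φ)
        = ∑ j ∈ Finset.range M, ∑ k ∈ Finset.range M, Q.coeff j * (starRingEnd ℂ) (Q.coeff k) *
            ∫ φ in (0:ℝ)..(2*Real.pi), Complex.exp (((j - k : ℤ) : ℂ) * Complex.I * φ) := by
          rw [intervalIntegral.integral_congr (g := fun φ => ∑ j ∈ Finset.range M,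
            ∑ k ∈ Finset.range M, Q.coeff j * (starRingEnd ℂ) (Q.coeff k) *
              Complex.exp (((j - k : ℤ) : ℂ) * Complex.I * φ)) (fun φ _ => hexpand φ)]
          rw [intervalIntegral.integral_finset_sum]
          · refine Finset.sum_congr rfl fun j _ => ?_
            rw [intervalIntegral.integral_finset_sum]
            · exact Finset.sum_congr rfl fun k _ => intervalIntegral.integral_const_mul _ _
            · intro k _; apply Continuous.intervalIntegrable; fun_prop
          · intro j _; apply Continuous.intervalIntegrable
            apply continuous_finset_sum; intro k _; fun_prop
      _ = (2*Real.pi : ℂ) * ∑ k ∈ Finset.range M, (‖Q.coeff k‖^2 : ℝ) := by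
          rw [Complex.ofReal_sum, Finset.mul_sum]
          refine Finset.sum_congr rfl fun j hj => ?_
          rw [Finset.sum_eq_single j]
          · rw [expCircle, if_pos (sub_self _), Complex.mul_conj]
            simp [Complex.normSq_eq_norm_sq]
            ring
          · intro k hk hkj
            have : ((j:ℤ) - k) ≠ 0 := sub_ne_zero_of_ne (fun hc => hkj (by exact_mod_cast hc.symm))
            rw [expCircle, if_neg this, mul_zero]
          · intro hj'; exact absurd hj hj'
  have hpt : ∀ φ : ℝ, ((‖g φ‖^2 : ℝ) : ℂ) = g φ * (starRingEnd ℂ) (g φ) := by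
    intro φ
    rw [Complex.mul_conj]
    simp [Complex.normSq_eq_norm_sq]
  have : ((∫ φ in (0:ℝ)..(2*Real.pi), ‖g φ‖^2 : ℝ) : ℂ)
      = ((2*Real.pi * ∑ k ∈ Finset.range M, ‖Q.coeff k‖^2 : ℝ) : ℂ) := by
    rw [← intervalIntegral.integral_ofReal]
    rw [intervalIntegral.integral_congr (fun φ _ => hpt φ), key]
    push_cast
    ring
  exact_mod_cast this

private lemma coeff_mk {α : Type*} [Semiring α] (f : ℕ → α) (N : ℕ)
    (hf : ∀ k, N ≤ k → f k = 0) (m : ℕ) :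
    (∑ k ∈ Finset.range N, Polynomial.C (f k) * Polynomial.X ^ k).coeff m = f m := by
  rw [Polynomial.finset_sum_coeff]
  simp only [Polynomial.coeff_C_mul, Polynomial.coeff_X_pow, mul_ite, mul_one, mul_zero]
  rw [Finset.sum_ite_eq (Finset.range N) m f]
  by_cases hm : m ∈ Finset.range N
  · rw [if_pos hm]
  · rw [if_neg hm]
    exact (hf m (by simpa using hm)).symm

private lemma natDegree_mk_lt {α : Type*} [Semiring α] (f : ℕ → α) (N : ℕ) (hN : 0 < N) :
    (∑ k ∈ Finset.range N, Polynomial.C (f k) * Polynomial.X ^ k).natDegree < N := by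
  set P := ∑ k ∈ Finset.range N, Polynomial.C (f k) * Polynomial.X ^ k with hP
  rcases eq_or_ne P 0 with h0 | h0
  · rw [h0]; simpa using hN
  · rw [Polynomial.natDegree_lt_iff_degree_lt h0]
    apply lt_of_le_of_lt (Polynomial.degree_sum_le _ _)
    rw [Finset.sup_lt_iff (by exact_mod_cast WithBot.bot_lt_coe N)]
    intro k hk
    exact lt_of_le_of_lt (Polynomial.degree_C_mul_X_pow_le _ _)
      (by exact_mod_cast Finset.mem_range.mp hk)

namespace WehrlAux

variable (n : ℕ) (ψ : EuclideanSpace ℂ (Fin (n + 1)))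

/-- `q k = √(C(n,k)) ψ_k`, extended by zero. -/
noncomputable def q (k : ℕ) : ℂ :=
  if h : k < n + 1 then (Real.sqrt (n.choose k) : ℂ) * ψ ⟨k, h⟩ else 0

/-- `y k = ‖ψ_k‖`, extended by zero. -/
noncomputable def y (k : ℕ) : ℝ := if h : k < n + 1 then ‖ψ ⟨k, h⟩‖ else 0

lemma norm_q (k : ℕ) : ‖q n ψ k‖ = Real.sqrt (n.choose k) * y n ψ k := by
  unfold q y
  split
  · rw [norm_mul, Complex.norm_real, Real.norm_eq_abs,
      _root_.abs_of_nonneg (Real.sqrt_nonneg _)]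
  · simp

/-- coefficient function of `P p`. -/
noncomputable def cf (p : ℝ) (k : ℕ) : ℂ :=
  ((Real.sqrt p ^ k * Real.sqrt (1 - p) ^ (n - k) : ℝ) : ℂ) * q n ψ k

/-- The polynomial whose evaluation at `e^{iφ}` is `ov n (p, φ) ψ`. -/
noncomputable def P (p : ℝ) : Polynomial ℂ :=
  ∑ k ∈ Finset.range (n + 1), Polynomial.C (cf n ψ p k) * Polynomial.X ^ k

lemma q_eq_zero {k : ℕ} (hk : n + 1 ≤ k) : q n ψ k = 0 := by unfold q; rw [dif_neg (by omega)]

lemma cf_eq_zero {k : ℕ} (hk : n + 1 ≤ k) : cf n ψ p k = 0 := by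
  unfold cf; rw [q_eq_zero n ψ hk, mul_zero]

lemma coeff_P (p : ℝ) (k : ℕ) : (P n ψ p).coeff k = cf n ψ p k :=
  coeff_mk _ _ (fun _ hk => cf_eq_zero n ψ hk) k

lemma natDegree_P_lt (p : ℝ) : (P n ψ p).natDegree < n + 1 :=
  natDegree_mk_lt _ _ (Nat.succ_pos n)

lemma ov_eq_eval (p φ : ℝ) :
    ov n (p, φ) ψ = (P n ψ p).eval (Complex.exp (Complex.I * φ)) := by
  rw [Polynomial.eval_eq_sum_range' (natDegree_P_lt n ψ p)]
  unfold ov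
  rw [PiLp.inner_apply]
  rw [← Fin.sum_univ_eq_sum_range
    (fun k => (P n ψ p).coeff k * Complex.exp (Complex.I * φ) ^ k) (n+1)]
  refine Finset.sum_congr rfl fun k _ => ?_
  rw [RCLike.inner_apply, coeff_P]
  unfold bloch cf q
  rw [dif_pos k.isLt]
  have hfin : (⟨(k : ℕ), k.isLt⟩ : Fin (n+1)) = k := by ext; rfl
  rw [hfin]
  rw [map_mul]
  have h1 : (starRingEnd ℂ) ((↑(Real.sqrt (n.choose k) * Real.sqrt p ^ (k:ℕ) *
      Real.sqrt (1-p) ^ (n - (k:ℕ))) : ℂ)) =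
      (↑(Real.sqrt (n.choose k) * Real.sqrt p ^ (k:ℕ) * Real.sqrt (1-p) ^ (n - (k:ℕ))) : ℂ) :=
    Complex.conj_ofReal _
  have h2 : (starRingEnd ℂ) (Complex.exp (-((k:ℕ) : ℂ) * Complex.I * (φ:ℝ))) =
      Complex.exp (Complex.I * φ) ^ (k : ℕ) := by
    rw [← Complex.exp_conj, ← Complex.exp_nat_mul]
    congr 1
    simp only [map_mul, map_neg, Complex.conj_I, Complex.conj_ofReal, Complex.conj_natCast]
    ring
  rw [h1, h2]
  push_cast
  ring

end WehrlAux

namespace WehrlAux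

variable (n : ℕ) (ψ : EuclideanSpace ℂ (Fin (n + 1)))

/-- `Q = Σ q_k X^k`. -/
noncomputable def Q : Polynomial ℂ :=
  ∑ k ∈ Finset.range (n + 1), Polynomial.C (q n ψ k) * Polynomial.X ^ k

lemma coeff_Q (k : ℕ) : (Q n ψ).coeff k = q n ψ k :=
  coeff_mk _ _ (fun _ hk => q_eq_zero n ψ hk) k

lemma coeff_Psq (p : ℝ) {s : ℕ} (hs : s ≤ 2 * n) :
    (P n ψ p ^ 2).coeff s =
      ((Real.sqrt p ^ s * Real.sqrt (1 - p) ^ (2 * n - s) : ℝ) : ℂ) * (Q n ψ ^ 2).coeff s := by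
  rw [sq, sq, Polynomial.coeff_mul, Polynomial.coeff_mul, Finset.mul_sum]
  refine Finset.sum_congr rfl fun jl hjl => ?_
  have hsum : jl.1 + jl.2 = s := Finset.HasAntidiagonal.mem_antidiagonal.mp hjl
  subst hsum
  rw [coeff_P, coeff_P, coeff_Q, coeff_Q]
  by_cases hj : jl.1 < n + 1
  · by_cases hl : jl.2 < n + 1
    · unfold cf
      have hpow : Real.sqrt p ^ jl.1 * Real.sqrt (1-p) ^ (n - jl.1) *
          (Real.sqrt p ^ jl.2 * Real.sqrt (1-p) ^ (n - jl.2)) =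
          Real.sqrt p ^ (jl.1 + jl.2) * Real.sqrt (1-p) ^ (2*n - (jl.1 + jl.2)) := by
        rw [show Real.sqrt p ^ jl.1 * Real.sqrt (1-p) ^ (n - jl.1) *
            (Real.sqrt p ^ jl.2 * Real.sqrt (1-p) ^ (n - jl.2)) =
            Real.sqrt p ^ (jl.1 + jl.2) * Real.sqrt (1-p) ^ ((n - jl.1) + (n - jl.2)) by
          rw [pow_add, pow_add]; ring]
        congr 2
        omega
      have hcast : ((Real.sqrt p ^ (jl.1 + jl.2) * Real.sqrt (1-p) ^ (2*n - (jl.1+jl.2)) : ℝ) : ℂ)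
          = ((Real.sqrt p ^ jl.1 * Real.sqrt (1-p) ^ (n - jl.1) : ℝ) : ℂ)
            * ((Real.sqrt p ^ jl.2 * Real.sqrt (1-p) ^ (n - jl.2) : ℝ) : ℂ) := by
        rw [← Complex.ofReal_mul, ← hpow]
      rw [hcast]
      ring
    · rw [q_eq_zero n ψ (k := jl.2) (by omega), cf_eq_zero n ψ (p := p) (k := jl.2) (by omega)]
      simp
  · rw [q_eq_zero n ψ (k := jl.1) (by omega), cf_eq_zero n ψ (p := p) (k := jl.1) (by omega)]
    simp

lemma natDegree_Psq_lt (p : ℝ) : (P n ψ p ^ 2).natDegree < 2 * n + 1 := by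
  rw [Polynomial.natDegree_pow]
  have := natDegree_P_lt n ψ p
  omega

lemma natDegree_Q_lt : (Q n ψ).natDegree < n + 1 :=
  natDegree_mk_lt _ _ (Nat.succ_pos n)

lemma natDegree_Qsq_lt : (Q n ψ ^ 2).natDegree < 2 * n + 1 := by
  rw [Polynomial.natDegree_pow]
  have := natDegree_Q_lt n ψ
  omega

end WehrlAux

namespace WehrlAux

variable (n : ℕ) (ψ : EuclideanSpace ℂ (Fin (n + 1)))

lemma norm_cf_sq {p : ℝ} (hp : p ∈ Set.Icc (0:ℝ) 1) (k : ℕ) :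
    ‖cf n ψ p k‖ ^ 2 = p ^ k * (1 - p) ^ (n - k) * ‖q n ψ k‖ ^ 2 := by
  unfold cf
  rw [norm_mul, mul_pow, Complex.norm_real, Real.norm_eq_abs, _root_.sq_abs, mul_pow,
    ← pow_mul, ← pow_mul, mul_comm k 2, mul_comm (n - k) 2, pow_mul, pow_mul,
    Real.sq_sqrt hp.1, Real.sq_sqrt (by linarith [hp.2] : (0:ℝ) ≤ 1 - p)]

lemma norm_coeff_Psq {p : ℝ} (hp : p ∈ Set.Icc (0:ℝ) 1) {s : ℕ} (hs : s ≤ 2 * n) :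
    ‖(P n ψ p ^ 2).coeff s‖ ^ 2 =
      p ^ s * (1 - p) ^ (2 * n - s) * ‖(Q n ψ ^ 2).coeff s‖ ^ 2 := by
  rw [coeff_Psq n ψ p hs, norm_mul, mul_pow, Complex.norm_real, Real.norm_eq_abs, _root_.sq_abs,
    mul_pow, ← pow_mul, ← pow_mul, mul_comm s 2, mul_comm (2*n - s) 2, pow_mul, pow_mul,
    Real.sq_sqrt hp.1, Real.sq_sqrt (by linarith [hp.2] : (0:ℝ) ≤ 1 - p)]

/-- Real polynomial with coefficients `‖ψ_k‖²`. -/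
noncomputable def R : Polynomial ℝ :=
  ∑ k ∈ Finset.range (n + 1), Polynomial.C (y n ψ k ^ 2) * Polynomial.X ^ k

lemma y_eq_zero {k : ℕ} (hk : n + 1 ≤ k) : y n ψ k = 0 := by unfold y; rw [dif_neg (by omega)]

lemma coeff_R (k : ℕ) : (R n ψ).coeff k = y n ψ k ^ 2 :=
  coeff_mk _ _ (fun _ hk => by rw [y_eq_zero n ψ hk]; ring) k

lemma coeff_Rsq_nonneg (s : ℕ) : 0 ≤ (R n ψ ^ 2).coeff s := by
  rw [sq, Polynomial.coeff_mul]
  apply Finset.sum_nonneg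
  intro jl _
  rw [coeff_R, coeff_R]
  positivity

lemma cs_bound (s : ℕ) :
    ‖(Q n ψ ^ 2).coeff s‖ ^ 2 ≤ ((2 * n).choose s : ℝ) * (R n ψ ^ 2).coeff s := by
  have h1 : ‖(Q n ψ ^ 2).coeff s‖ ≤
      ∑ jl ∈ Finset.HasAntidiagonal.antidiagonal s,
        (Real.sqrt (n.choose jl.1) * Real.sqrt (n.choose jl.2)) * (y n ψ jl.1 * y n ψ jl.2) := by
    rw [sq, Polynomial.coeff_mul]
    refine le_trans (norm_sum_le _ _) (le_of_eq (Finset.sum_congr rfl fun jl _ => ?_))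
    rw [norm_mul, coeff_Q, coeff_Q, norm_q, norm_q]
    ring
  have h2 : (∑ jl ∈ Finset.HasAntidiagonal.antidiagonal s,
        (Real.sqrt (n.choose jl.1) * Real.sqrt (n.choose jl.2)) * (y n ψ jl.1 * y n ψ jl.2)) ^ 2
      ≤ (∑ jl ∈ Finset.HasAntidiagonal.antidiagonal s,
          (Real.sqrt (n.choose jl.1) * Real.sqrt (n.choose jl.2)) ^ 2) *
        ∑ jl ∈ Finset.HasAntidiagonal.antidiagonal s, (y n ψ jl.1 * y n ψ jl.2) ^ 2 :=
    Finset.sum_mul_sq_le_sq_mul_sq _ _ _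
  have h3 : ∑ jl ∈ Finset.HasAntidiagonal.antidiagonal s,
      (Real.sqrt (n.choose jl.1) * Real.sqrt (n.choose jl.2)) ^ 2 = ((2 * n).choose s : ℝ) := by
    have : ∀ jl ∈ Finset.HasAntidiagonal.antidiagonal s,
        (Real.sqrt (n.choose jl.1) * Real.sqrt (n.choose jl.2)) ^ 2 =
          ((1 + Polynomial.X : Polynomial ℝ) ^ n).coeff jl.1 *
            ((1 + Polynomial.X : Polynomial ℝ) ^ n).coeff jl.2 := by
      intro jl _
      rw [mul_pow, Real.sq_sqrt (by positivity), Real.sq_sqrt (by positivity),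
        Polynomial.coeff_one_add_X_pow, Polynomial.coeff_one_add_X_pow]
    rw [Finset.sum_congr rfl this, ← Polynomial.coeff_mul, ← sq, ← pow_mul,
      Polynomial.coeff_one_add_X_pow]
    norm_num [mul_comm]
  have h4 : ∑ jl ∈ Finset.HasAntidiagonal.antidiagonal s, (y n ψ jl.1 * y n ψ jl.2) ^ 2 =
      (R n ψ ^ 2).coeff s := by
    rw [sq, Polynomial.coeff_mul]
    exact Finset.sum_congr rfl fun jl _ => by rw [coeff_R, coeff_R]; ring
  calc ‖(Q n ψ ^ 2).coeff s‖ ^ 2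
      ≤ (∑ jl ∈ Finset.HasAntidiagonal.antidiagonal s,
          (Real.sqrt (n.choose jl.1) * Real.sqrt (n.choose jl.2)) * (y n ψ jl.1 * y n ψ jl.2)) ^ 2 := by
        apply pow_le_pow_left₀ (norm_nonneg _) h1
    _ ≤ ((2 * n).choose s : ℝ) * (R n ψ ^ 2).coeff s := by rw [← h3, ← h4]; exact h2

lemma natDegree_R_lt : (R n ψ).natDegree < n + 1 := natDegree_mk_lt _ _ (Nat.succ_pos n)
lemma sum_coeff_Rsq (hψ : ‖ψ‖ = 1) :
    ∑ s ∈ Finset.range (2 * n + 1), (R n ψ ^ 2).coeff s = 1 := by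
  have hdeg : (R n ψ ^ 2).natDegree < 2 * n + 1 := by
    rw [Polynomial.natDegree_pow]
    have := natDegree_R_lt n ψ
    omega
  have heval := Polynomial.eval_eq_sum_range' hdeg (1 : ℝ)
  simp only [one_pow, mul_one] at heval
  rw [← heval, Polynomial.eval_pow]
  have hR1 : (R n ψ).eval 1 = 1 := by
    unfold R
    rw [Polynomial.eval_finset_sum]
    simp only [Polynomial.eval_mul, Polynomial.eval_C, Polynomial.eval_pow, Polynomial.eval_X,
      one_pow, mul_one]
    have hfin : ∑ k ∈ Finset.range (n+1), y n ψ k ^ 2 = ∑ k : Fin (n+1), ‖ψ k‖ ^ 2 := by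
      rw [← Fin.sum_univ_eq_sum_range (fun k => y n ψ k ^ 2) (n+1)]
      refine Finset.sum_congr rfl fun k _ => ?_
      unfold y
      rw [dif_pos k.isLt]
    rw [hfin]
    have hnn : (0:ℝ) ≤ ∑ i : Fin (n+1), ‖ψ i‖ ^ 2 := by positivity
    have hs : Real.sqrt (∑ i : Fin (n+1), ‖ψ i‖ ^ 2) = 1 := by
      rw [← EuclideanSpace.norm_eq]; exact hψ
    rw [← Real.sq_sqrt hnn, hs, one_pow]
  rw [hR1, one_pow]

end WehrlAux

namespace WehrlAux

variable (n : ℕ) (ψ : EuclideanSpace ℂ (Fin (n + 1)))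

lemma sum_y_sq (hψ : ‖ψ‖ = 1) : ∑ k ∈ Finset.range (n+1), y n ψ k ^ 2 = 1 := by
  have hfin : ∑ k ∈ Finset.range (n+1), y n ψ k ^ 2 = ∑ k : Fin (n+1), ‖ψ k‖ ^ 2 := by
    rw [← Fin.sum_univ_eq_sum_range (fun k => y n ψ k ^ 2) (n+1)]
    refine Finset.sum_congr rfl fun k _ => ?_
    unfold y
    rw [dif_pos k.isLt]
  rw [hfin]
  have hnn : (0:ℝ) ≤ ∑ i : Fin (n+1), ‖ψ i‖ ^ 2 := by positivity
  have hs : Real.sqrt (∑ i : Fin (n+1), ‖ψ i‖ ^ 2) = 1 := by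
    rw [← EuclideanSpace.norm_eq]; exact hψ
  rw [← Real.sq_sqrt hnn, hs, one_pow]

/-- `A p = (∫φ ‖ov‖²)/2π`. -/
noncomputable def A (p : ℝ) : ℝ :=
  ∑ k ∈ Finset.range (n+1),
    (Real.sqrt p ^ k * Real.sqrt (1-p) ^ (n-k)) ^ 2 * ‖q n ψ k‖ ^ 2

/-- `B p = (∫φ ‖ov‖⁴)/2π`. -/
noncomputable def B (p : ℝ) : ℝ :=
  ∑ s ∈ Finset.range (2*n+1),
    (Real.sqrt p ^ s * Real.sqrt (1-p) ^ (2*n-s)) ^ 2 * ‖(Q n ψ ^ 2).coeff s‖ ^ 2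

lemma continuous_A : Continuous (A n ψ) := by
  apply continuous_finset_sum
  intro k _
  fun_prop

lemma continuous_B : Continuous (B n ψ) := by
  apply continuous_finset_sum
  intro s _
  fun_prop

lemma A_eq (p : ℝ) :
    (∫ φ in (0:ℝ)..(2*Real.pi), ‖ov n (p, φ) ψ‖ ^ 2) = 2*Real.pi * A n ψ p := by
  have h1 : ∀ φ : ℝ, ‖ov n (p, φ) ψ‖ ^ 2
      = ‖(P n ψ p).eval (Complex.exp (Complex.I * φ))‖ ^ 2 := by
    intro φ; rw [ov_eq_eval]
  rw [intervalIntegral.integral_congr (fun φ _ => h1 φ), parseval _ _ (natDegree_P_lt n ψ p)]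
  unfold A
  congr 1
  refine Finset.sum_congr rfl fun k _ => ?_
  rw [coeff_P]
  unfold cf
  rw [norm_mul, mul_pow, Complex.norm_real, Real.norm_eq_abs, _root_.sq_abs]

lemma B_eq (p : ℝ) :
    (∫ φ in (0:ℝ)..(2*Real.pi), (‖ov n (p, φ) ψ‖ ^ 2) ^ 2) = 2*Real.pi * B n ψ p := by
  have h1 : ∀ φ : ℝ, (‖ov n (p, φ) ψ‖ ^ 2) ^ 2
      = ‖(P n ψ p ^ 2).eval (Complex.exp (Complex.I * φ))‖ ^ 2 := by
    intro φ
    rw [ov_eq_eval, Polynomial.eval_pow, norm_pow]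
  rw [intervalIntegral.integral_congr (fun φ _ => h1 φ), parseval _ _ (natDegree_Psq_lt n ψ p)]
  unfold B
  congr 1
  refine Finset.sum_congr rfl fun s hs => ?_
  rw [coeff_Psq n ψ p (by have := Finset.mem_range.mp hs; omega)]
  rw [norm_mul, mul_pow, Complex.norm_real, Real.norm_eq_abs, _root_.sq_abs]

lemma intA (hψ : ‖ψ‖ = 1) : ∫ p in (0:ℝ)..1, A n ψ p = 1 / ((n:ℝ)+1) := by
  have hcongr : ∀ p ∈ Set.uIcc (0:ℝ) 1, A n ψ p
      = ∑ k ∈ Finset.range (n+1), p^k * (1-p)^(n-k) * ‖q n ψ k‖^2 := by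
    intro p hp
    rw [Set.uIcc_of_le (by norm_num)] at hp
    unfold A
    refine Finset.sum_congr rfl fun k _ => ?_
    rw [mul_pow, ← pow_mul, ← pow_mul, mul_comm k 2, mul_comm (n-k) 2, pow_mul, pow_mul,
      Real.sq_sqrt hp.1, Real.sq_sqrt (by linarith [hp.2] : (0:ℝ) ≤ 1 - p)]
  rw [intervalIntegral.integral_congr hcongr, intervalIntegral.integral_finset_sum
    (fun k _ => by apply Continuous.intervalIntegrable; fun_prop)]
  have hterm : ∀ k ∈ Finset.range (n+1),
      (∫ p in (0:ℝ)..1, p^k * (1-p)^(n-k) * ‖q n ψ k‖^2)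
        = (1/((n:ℝ)+1)) * y n ψ k ^ 2 := by
    intro k hk
    have hk' : k ≤ n := by have := Finset.mem_range.mp hk; omega
    rw [intervalIntegral.integral_mul_const, betaNat, norm_q, mul_pow,
      Real.sq_sqrt (by positivity)]
    have hkn : k + (n - k) + 1 = n + 1 := by omega
    rw [hkn]
    have hfact : (n.choose k : ℝ) * (k.factorial * (n-k).factorial) = n.factorial := by
      exact_mod_cast congrArg (Nat.cast : ℕ → ℝ)
        (by rw [← Nat.choose_mul_factorial_mul_factorial hk']; ring)
    have hkf : (0:ℝ) < (k.factorial:ℝ) * (n-k).factorial := by positivity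
    have hchoose : (n.choose k : ℝ) = (n.factorial:ℝ) / ((k.factorial:ℝ) * (n-k).factorial) := by
      field_simp
      linarith [hfact]
    rw [Nat.factorial_succ, hchoose]
    have hnf : (0:ℝ) < (n.factorial:ℝ) := by positivity
    push_cast
    field_simp
  rw [Finset.sum_congr rfl hterm, ← Finset.mul_sum, sum_y_sq n ψ hψ, mul_one]

lemma intB_le (hψ : ‖ψ‖ = 1) : ∫ p in (0:ℝ)..1, B n ψ p ≤ 1 / (2*(n:ℝ)+1) := by
  have hcongr : ∀ p ∈ Set.uIcc (0:ℝ) 1, B n ψ p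
      = ∑ s ∈ Finset.range (2*n+1), p^s * (1-p)^(2*n-s) * ‖(Q n ψ ^2).coeff s‖^2 := by
    intro p hp
    rw [Set.uIcc_of_le (by norm_num)] at hp
    unfold B
    refine Finset.sum_congr rfl fun s _ => ?_
    rw [mul_pow, ← pow_mul, ← pow_mul, mul_comm s 2, mul_comm (2*n-s) 2, pow_mul, pow_mul,
      Real.sq_sqrt hp.1, Real.sq_sqrt (by linarith [hp.2] : (0:ℝ) ≤ 1 - p)]
  rw [intervalIntegral.integral_congr hcongr, intervalIntegral.integral_finset_sum
    (fun s _ => by apply Continuous.intervalIntegrable; fun_prop)]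
  have hterm : ∀ s ∈ Finset.range (2*n+1),
      (∫ p in (0:ℝ)..1, p^s * (1-p)^(2*n-s) * ‖(Q n ψ ^2).coeff s‖^2)
        ≤ (1/(2*(n:ℝ)+1)) * (R n ψ ^ 2).coeff s := by
    intro s hs
    have hs' : s ≤ 2*n := by have := Finset.mem_range.mp hs; omega
    rw [intervalIntegral.integral_mul_const, betaNat]
    have hsn : s + (2*n - s) + 1 = 2*n + 1 := by omega
    rw [hsn]
    have hfact : ((2*n).choose s : ℝ) * (s.factorial * (2*n-s).factorial) = (2*n).factorial := by
      exact_mod_cast congrArg (Nat.cast : ℕ → ℝ)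
        (by rw [← Nat.choose_mul_factorial_mul_factorial hs']; ring)
    have hle := cs_bound n ψ s
    have hpos : (0:ℝ) < (s.factorial : ℝ) * (2*n-s).factorial / (2*n+1).factorial := by
      positivity
    calc (s.factorial : ℝ) * (2*n-s).factorial / (2*n+1).factorial * ‖(Q n ψ ^2).coeff s‖^2
        ≤ (s.factorial : ℝ) * (2*n-s).factorial / (2*n+1).factorial *
            (((2*n).choose s : ℝ) * (R n ψ ^ 2).coeff s) := by
          apply mul_le_mul_of_nonneg_left hle (le_of_lt hpos)
      _ = (1/(2*(n:ℝ)+1)) * (R n ψ ^ 2).coeff s := by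
          have hsf : (0:ℝ) < (s.factorial:ℝ) * (2*n-s).factorial := by positivity
          have hchoose : ((2*n).choose s : ℝ)
              = ((2*n).factorial:ℝ) / ((s.factorial:ℝ) * (2*n-s).factorial) := by
            field_simp
            linarith [hfact]
          rw [Nat.factorial_succ, hchoose]
          have hnf : (0:ℝ) < ((2*n).factorial:ℝ) := by positivity
          push_cast
          field_simp
  calc (∑ s ∈ Finset.range (2*n+1), ∫ p in (0:ℝ)..1, p^s * (1-p)^(2*n-s) * ‖(Q n ψ ^2).coeff s‖^2)
      ≤ ∑ s ∈ Finset.range (2*n+1), (1/(2*(n:ℝ)+1)) * (R n ψ ^ 2).coeff s :=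
        Finset.sum_le_sum hterm
    _ = 1/(2*(n:ℝ)+1) := by rw [← Finset.mul_sum, sum_coeff_Rsq n ψ hψ, mul_one]

end WehrlAux

private lemma mul_log_le (t x : ℝ) (ht : 0 < t) (hx : 0 ≤ x) :
    x * Real.log x ≤ x^2/t - x + x * Real.log t := by
  rcases eq_or_lt_of_le hx with h0 | h0
  · rw [← h0]; simp
  · have hlog : Real.log (x/t) ≤ x/t - 1 := Real.log_le_sub_one_of_pos (by positivity)
    have hsplit : Real.log x = Real.log (x/t) + Real.log t := by
      rw [Real.log_div (ne_of_gt h0) (ne_of_gt ht)]; ring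
    rw [hsplit]
    have hmul := mul_le_mul_of_nonneg_left hlog hx
    have hxt : x * (x/t - 1) = x^2/t - x := by field_simp
    nlinarith

/-- Crude lower bound on the Wehrl entropy:
`S_W(ψ) ≥ ln((2n+1)/(n+1))`, which is positive for `n ≥ 1`. -/
theorem wehrl_lower_bound (n : ℕ) (ψ : EuclideanSpace ℂ (Fin (n + 1))) (hψ : ‖ψ‖ = 1) :
    Real.log ((2 * (n : ℝ) + 1) / ((n : ℝ) + 1)) ≤ wehrl n ψ ∧
      (1 ≤ n → 0 < Real.log ((2 * (n : ℝ) + 1) / ((n : ℝ) + 1))) := by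
  have h2π : (0:ℝ) < 2 * Real.pi := by positivity
  constructor
  · set t : ℝ := ((n:ℝ)+1)/(2*(n:ℝ)+1) with htdef
    have htpos : 0 < t := by positivity
    have hlogeq : Real.log ((2*(n:ℝ)+1)/((n:ℝ)+1)) = -Real.log t := by
      rw [← Real.log_inv, htdef, inv_div]
    -- continuity of the Husimi density
    have h1 : Continuous (fun Ω : ℝ × ℝ => ov n Ω ψ) := by
      have heq : (fun Ω : ℝ × ℝ => ov n Ω ψ)
          = fun Ω => ∑ k : Fin (n+1), (starRingEnd ℂ) (bloch n Ω k) * ψ k := by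
        funext Ω
        rw [show ov n Ω ψ = inner ℂ (bloch n Ω) ψ from rfl, PiLp.inner_apply]
        exact Finset.sum_congr rfl fun k _ => by rw [RCLike.inner_apply, mul_comm]
      rw [heq]
      apply continuous_finset_sum
      intro k _
      apply Continuous.mul _ continuous_const
      apply Continuous.comp Complex.continuous_conj
      unfold bloch
      fun_prop
    have hF : Continuous (fun Ω : ℝ × ℝ => ‖ov n Ω ψ‖^2) := (h1.norm).pow 2
    have hFlog : Continuous (fun Ω : ℝ × ℝ => ‖ov n Ω ψ‖^2 * Real.log (‖ov n Ω ψ‖^2)) :=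
      Real.continuous_mul_log.comp hF
    set L : ℝ → ℝ := fun p =>
      (∫ φ in (0:ℝ)..(2*Real.pi), ‖ov n (p,φ) ψ‖^2 * Real.log (‖ov n (p,φ) ψ‖^2))/(2*Real.pi)
      with hLdef
    have hwehrl : wehrl n ψ = -((n:ℝ)+1) * ∫ p in (0:ℝ)..1, L p := rfl
    set U : ℝ → ℝ := fun p =>
      (1/t) * WehrlAux.B n ψ p - (1 - Real.log t) * WehrlAux.A n ψ p with hUdef
    have hLU : ∀ p : ℝ, L p ≤ U p := by
      intro p
      have hc1 : Continuous (fun φ : ℝ => ‖ov n (p,φ) ψ‖^2 * Real.log (‖ov n (p,φ) ψ‖^2)) :=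
        hFlog.comp (Continuous.prodMk_right p)
      have hc2 : Continuous (fun φ : ℝ => ‖ov n (p,φ) ψ‖^2) := hF.comp (Continuous.prodMk_right p)
      have hmono : (∫ φ in (0:ℝ)..(2*Real.pi), ‖ov n (p,φ) ψ‖^2 * Real.log (‖ov n (p,φ) ψ‖^2))
          ≤ ∫ φ in (0:ℝ)..(2*Real.pi),
              ((1/t) * (‖ov n (p,φ) ψ‖^2)^2 - (1 - Real.log t) * ‖ov n (p,φ) ψ‖^2) := by
        apply intervalIntegral.integral_mono_on (le_of_lt h2π)
        · exact hc1.intervalIntegrable _ _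
        · exact (((continuous_const.mul (hc2.pow 2))).sub
            (continuous_const.mul hc2)).intervalIntegrable _ _
        · intro φ _
          have hkey := mul_log_le t (‖ov n (p,φ) ψ‖^2) htpos (by positivity)
          have : (‖ov n (p,φ) ψ‖^2)^2/t = (1/t) * (‖ov n (p,φ) ψ‖^2)^2 := by ring
          linarith
      have hlin : (∫ φ in (0:ℝ)..(2*Real.pi),
            ((1/t) * (‖ov n (p,φ) ψ‖^2)^2 - (1 - Real.log t) * ‖ov n (p,φ) ψ‖^2))
          = (1/t) * (2*Real.pi * WehrlAux.B n ψ p)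
            - (1 - Real.log t) * (2*Real.pi * WehrlAux.A n ψ p) := by
        rw [intervalIntegral.integral_sub
            (show IntervalIntegrable (fun φ => (1/t) * (‖ov n (p,φ) ψ‖^2)^2) volume 0 (2*Real.pi) from
              (continuous_const.mul (hc2.pow 2)).intervalIntegrable _ _)
            (show IntervalIntegrable (fun φ => (1 - Real.log t) * ‖ov n (p,φ) ψ‖^2) volume 0 (2*Real.pi) from
              (continuous_const.mul hc2).intervalIntegrable _ _),
          intervalIntegral.integral_const_mul, intervalIntegral.integral_const_mul,
          WehrlAux.A_eq, WehrlAux.B_eq]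
      have hstep : L p ≤ ((1/t) * (2*Real.pi * WehrlAux.B n ψ p)
          - (1 - Real.log t) * (2*Real.pi * WehrlAux.A n ψ p))/(2*Real.pi) := by
        rw [hLdef]
        apply (div_le_div_iff_of_pos_right h2π).mpr
        rw [← hlin]
        exact hmono
      refine le_trans hstep (le_of_eq ?_)
      rw [hUdef]
      field_simp
    have hLint : IntervalIntegrable L volume 0 1 := by
      apply Continuous.intervalIntegrable
      apply Continuous.div_const
      exact intervalIntegral.continuous_parametric_intervalIntegral_of_continuous'
        (f := fun p φ => ‖ov n (p,φ) ψ‖^2 * Real.log (‖ov n (p,φ) ψ‖^2)) hFlog 0 (2*Real.pi)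
    have hUint : IntervalIntegrable U volume 0 1 :=
      ((continuous_const.mul (WehrlAux.continuous_B n ψ)).sub
        (continuous_const.mul (WehrlAux.continuous_A n ψ))).intervalIntegrable _ _
    have hmono2 : (∫ p in (0:ℝ)..1, L p) ≤ ∫ p in (0:ℝ)..1, U p :=
      intervalIntegral.integral_mono_on (by norm_num) hLint hUint (fun p _ => hLU p)
    have hUval : (∫ p in (0:ℝ)..1, U p)
        = (1/t) * (∫ p in (0:ℝ)..1, WehrlAux.B n ψ p)
          - (1 - Real.log t) * ∫ p in (0:ℝ)..1, WehrlAux.A n ψ p := by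
      rw [hUdef]
      rw [intervalIntegral.integral_sub
          (show IntervalIntegrable (fun p => (1/t) * WehrlAux.B n ψ p) volume 0 1 from
            (continuous_const.mul (WehrlAux.continuous_B n ψ)).intervalIntegrable _ _)
          (show IntervalIntegrable (fun p => (1 - Real.log t) * WehrlAux.A n ψ p) volume 0 1 from
            (continuous_const.mul (WehrlAux.continuous_A n ψ)).intervalIntegrable _ _),
        intervalIntegral.integral_const_mul, intervalIntegral.integral_const_mul]
    have hUle : (∫ p in (0:ℝ)..1, U p) ≤ Real.log t / ((n:ℝ)+1) := by
      rw [hUval, WehrlAux.intA n ψ hψ]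
      have hB := WehrlAux.intB_le n ψ hψ
      have hmul := mul_le_mul_of_nonneg_left hB (le_of_lt (by positivity : (0:ℝ) < 1/t))
      have h1t : (1/t) = (2*(n:ℝ)+1)/((n:ℝ)+1) := by rw [htdef, one_div, inv_div]
      have heq : (1/t) * (1/(2*(n:ℝ)+1)) = 1/((n:ℝ)+1) := by
        rw [h1t]
        have hn1 : ((n:ℝ)+1) ≠ 0 := by positivity
        have hn2 : (2*(n:ℝ)+1) ≠ 0 := by positivity
        field_simp
      have hexp : (1 - Real.log t) * (1/((n:ℝ)+1))
          = 1/((n:ℝ)+1) - Real.log t/((n:ℝ)+1) := by ring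
      linarith
    have hfin : (∫ p in (0:ℝ)..1, L p) ≤ Real.log t / ((n:ℝ)+1) := le_trans hmono2 hUle
    rw [hwehrl, hlogeq]
    have hmul := mul_le_mul_of_nonpos_left hfin (neg_nonpos.mpr (by positivity) : -((n:ℝ)+1) ≤ 0)
    have hsimp : -((n:ℝ)+1) * (Real.log t/((n:ℝ)+1)) = -Real.log t := by
      field_simp
    linarith
  · intro hn
    apply Real.log_pos
    rw [one_lt_div (by positivity)]
    have : (1:ℝ) ≤ (n:ℝ) := by exact_mod_cast hn
    linarith
end
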